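/- arXiv:math/0412447 — 5 statements merged into one kernel-verified Lean document; each statement's English description precedes it below -/
import Mathlib

section
/- Let τ ∈ ℝ/ℤ, n a positive integer, and σ < 1/3. If ‖i·τ‖ ≤ σ for all i = 1, …, n (where ‖x‖ denotes the distance from a representative of x to the nearest integer), then ‖τ‖ ≤ σ/n. -/
/-- If `‖i • τ‖ ≤ σ < 1/3` for all `i = 1, …, n`, then `‖τ‖ ≤ σ / n`. -/
theorem norm_le_of_multiples_small (τ : AddCircle (1:ℝ)) (n : ℕ) (hn : 0 < n)
    (σ : ℝ) (hσ : σ < 1/3)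
    (h : ∀ i : ℕ, 1 ≤ i → i ≤ n → ‖i • τ‖ ≤ σ) :
    ‖τ‖ ≤ σ / n := by
  have hσ0 : 0 ≤ σ := le_trans (norm_nonneg _) (by simpa using h 1 le_rfl hn)
  induction τ using QuotientAddGroup.induction_on with | H x => ?_
  set t : ℝ := x - round x with ht_def
  have ht2 : |t| ≤ 1/2 := by simpa [ht_def] using abs_sub_round x
  have hτ : ((t : ℝ) : AddCircle (1:ℝ)) = ↑x := by
    have : ((((round x : ℤ) : ℝ)) : AddCircle (1:ℝ)) = 0 := by
      have := AddCircle.coe_zsmul (p := (1:ℝ)) (n := round x) (x := (1:ℝ))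
      simpa using this.symm
    have h2 : ((t : ℝ) : AddCircle (1:ℝ)) = ↑x - ↑((round x : ℤ):ℝ) := by
      rw [ht_def]; push_cast; exact QuotientAddGroup.mk_sub _ _ _
    rw [h2, this, sub_zero]
  have hnormt : ∀ y : ℝ, |y| ≤ 1/2 → ‖(y : AddCircle (1:ℝ))‖ = |y| := fun y hy => by
    rw [AddCircle.norm_coe_eq_abs_iff]; · simpa using hy
    · norm_num
  have hnorm : ‖((x : ℝ) : AddCircle (1:ℝ))‖ = |t| := by
    rw [← hτ, hnormt t ht2]
  have hsmul : ∀ k : ℕ, (k : ℕ) • ((x : ℝ) : AddCircle (1:ℝ)) = ((k * t : ℝ) : AddCircle (1:ℝ)) := by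
    intro k
    rw [← hτ, ← AddCircle.coe_nsmul]
    norm_num [nsmul_eq_mul]
  -- key claim
  have key : ∀ k : ℕ, 1 ≤ k → k ≤ n → |(k : ℝ) * t| ≤ σ := by
    intro k
    induction k with
    | zero => intro h1; omega
    | succ k ih =>
      intro _ hkn
      rcases Nat.eq_zero_or_pos k with rfl | hk
      · simpa [hnorm] using h 1 le_rfl hkn
      · have hk' := ih hk (le_trans (Nat.le_succ k) hkn)
        have habs : |((k+1 : ℕ) : ℝ) * t| ≤ 2 * σ := by
          have : ((k+1 : ℕ) : ℝ) * t = (k : ℝ) * t + t := by push_cast; ring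
          rw [this]
          have : |t| ≤ σ := by simpa [hnorm] using h 1 le_rfl hn
          calc |(k:ℝ)*t + t| ≤ |(k:ℝ)*t| + |t| := abs_add_le _ _
            _ ≤ 2 * σ := by linarith
        by_cases hhalf : |((k+1:ℕ) : ℝ) * t| ≤ 1/2
        · have := h (k+1) (by omega) hkn
          rw [hsmul (k+1), hnormt _ (by exact_mod_cast hhalf)] at this
          exact_mod_cast this
        · exfalso
          push_neg at hhalf
          set y : ℝ := ((k+1:ℕ) : ℝ) * t with hy
          have hle := h (k+1) (by omega) hkn
          rw [hsmul (k+1), AddCircle.norm_eq] at hle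
          simp only [inv_one, one_mul, mul_one] at hle
          rcases eq_or_ne (round y) 0 with hr | hr
          · rw [hr] at hle; simp at hle
            have hyl : |y| ≤ σ := by rw [hy]; push_cast; rw [abs_mul]; exact hle
            linarith
          · have hm1 : (1:ℝ) ≤ |((round y : ℤ) : ℝ)| := by
              exact_mod_cast Int.one_le_abs hr
            have : |y - ((round y : ℤ):ℝ)| ≥ |((round y:ℤ):ℝ)| - |y| := by
              have := abs_sub_abs_le_abs_sub ((round y:ℤ):ℝ) y
              rw [abs_sub_comm] at this; linarith
            linarith [hle, habs]
  have hfinal := key n hn le_rfl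
  have hnpos : (0:ℝ) < n := by exact_mod_cast hn
  have : (n:ℝ) * |t| ≤ σ := by
    rw [abs_mul, abs_of_pos hnpos] at hfinal; exact hfinal
  calc ‖((x : ℝ) : AddCircle (1:ℝ))‖ = |t| := hnorm
    _ ≤ σ / n := by rw [le_div_iff₀ hnpos]; linarith
end

section
/- Let H be a countable subgroup of 𝕋 = ℝ/ℤ admitting a characterizing sequence, and let (m_n) be an arbitrary strictly increasing sequence of positive integers. Then there exists a strictly increasing sequence (k_n) of positive integers characterizing H with k_n > m_n for all n. (A sequence (k_n) characterizes H iff for all α ∈ 𝕋: α ∈ H ⟺ ‖k_n α‖ → 0.) -/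
/-- A sequence of positive integers `k` characterizes the subgroup `H ≤ 𝕋` if
`α ∈ H ↔ ‖kₙ α‖ → 0`. -/
def Characterizes (k : ℕ → ℕ) (H : AddSubgroup (AddCircle (1:ℝ))) : Prop :=
  ∀ α : AddCircle (1:ℝ),
    α ∈ H ↔ Filter.Tendsto (fun n => ‖k n • α‖) Filter.atTop (nhds 0)

/-- Characterizing sequences of a countable subgroup of `𝕋` can be made
arbitrarily sparse: given any strictly increasing sequence `(mₙ)` there is a
strictly increasing characterizing sequence `(kₙ)` with `kₙ > mₙ`. -/
theorem exists_sparse_characterizing_sequence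
    (H : AddSubgroup (AddCircle (1:ℝ))) (hH : (H : Set (AddCircle (1:ℝ))).Countable)
    (c : ℕ → ℕ) (hc0 : ∀ n, 0 < c n) (hc : Characterizes c H)
    (m : ℕ → ℕ) (hm : StrictMono m) (hm0 : ∀ n, 0 < m n) :
    ∃ k : ℕ → ℕ, StrictMono k ∧ (∀ n, 0 < k n) ∧ (∀ n, m n < k n) ∧
      Characterizes k H := by
  classical
  obtain ⟨h, hrange⟩ := hH.exists_eq_range ⟨0, H.zero_mem⟩
  have hmemH : ∀ l, h l ∈ H := by
    intro l
    have : h l ∈ (H : Set (AddCircle (1:ℝ))) := hrange ▸ Set.mem_range_self l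
    exact this
  -- key existence lemma for big terms almost annihilating finitely many elements of H
  have key : ∀ n M : ℕ, ∃ b : ℕ, M < b ∧ ∀ l ≤ n, ‖b • h l‖ < 1/((n:ℝ)+1) := by
    intro n M
    set ε : ℝ := 1/(((n:ℝ)+1)*((M:ℝ)+2)) with hε
    have hεpos : 0 < ε := by positivity
    have hev : ∀ᶠ j in Filter.atTop, ∀ l ∈ Finset.range (n+1), ‖c j • h l‖ < ε := by
      rw [Filter.eventually_all_finset]
      intro l _
      exact ((hc (h l)).mp (hmemH l)).eventually_lt_const hεpos
    obtain ⟨J, hJ⟩ := hev.exists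
    refine ⟨(M+2) * c J, ?_, ?_⟩
    · have := hc0 J
      calc M < M + 2 := by omega
        _ ≤ (M+2) * c J := Nat.le_mul_of_pos_right _ this
    · intro l hl
      have h1 : ((M+2) * c J) • h l = (M+2) • (c J • h l) := by
        rw [mul_comm, mul_nsmul]
      rw [h1]
      calc ‖(M+2) • (c J • h l)‖ ≤ ((M:ℝ)+2) * ‖c J • h l‖ := by
            have : ‖(M+2) • (c J • h l)‖ ≤ ((M+2 : ℕ):ℝ) * ‖c J • h l‖ := norm_nsmul_le
            push_cast at this ⊢
            linarith
        _ < ((M:ℝ)+2) * ε := by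
            have hlt := hJ l (Finset.mem_range.mpr (by omega))
            have : (0:ℝ) < (M:ℝ)+2 := by positivity
            exact mul_lt_mul_of_pos_left hlt this
        _ = 1/((n:ℝ)+1) := by
            rw [hε]
            field_simp
  choose f hf1 hf2 using key
  -- recursive construction of the big terms
  obtain ⟨b, hb0, hbS, hbn⟩ :
      ∃ b : ℕ → ℕ, (m 1 + c 0 < b 0) ∧ (∀ p, b p + c p + m (2*p+3) < b (p+1)) ∧
        (∀ p, ∀ l ≤ p, ‖b p • h l‖ < 1/((p:ℝ)+1)) := by
    refine ⟨fun n => Nat.rec (f 0 (m 1 + c 0))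
        (fun p prev => f (p+1) (prev + c p + m (2*p+3))) n,
      hf1 0 _, fun p => hf1 (p+1) _, ?_⟩
    intro p
    cases p with
    | zero => exact hf2 0 _
    | succ q => exact hf2 (q+1) _
  have hmb : ∀ p, m (2*p+1) < b p := by
    intro p
    cases p with
    | zero =>
      have : m (2*0+1) = m 1 := by norm_num
      rw [this]
      exact lt_of_le_of_lt (Nat.le_add_right _ _) hb0
    | succ q =>
      have e : 2*(q+1)+1 = 2*q+3 := by ring
      rw [e]
      have := hbS q
      omega
  set k : ℕ → ℕ := fun n => if Even n then b (n/2) else b (n/2) + c (n/2) with hkdef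
  have hk_even : ∀ j, k (2*j) = b j := by
    intro j
    have h1 : Even (2*j) := ⟨j, by ring⟩
    have h2 : 2*j/2 = j := by omega
    simp [hkdef, h1, h2]
  have hk_odd : ∀ j, k (2*j+1) = b j + c j := by
    intro j
    have h1 : ¬ Even (2*j+1) := by
      simp [Nat.even_add_one, parity_simps]
    have h2 : (2*j+1)/2 = j := by omega
    simp [hkdef, h1, h2]
  have hbpos : ∀ p, 0 < b p := fun p => lt_of_le_of_lt (Nat.zero_le _) (hmb p)
  refine ⟨k, ?_, ?_, ?_, ?_⟩
  · -- StrictMono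
    apply strictMono_nat_of_lt_succ
    intro n
    rcases Nat.even_or_odd n with ⟨j, hj⟩ | ⟨j, hj⟩
    · have hn : n = 2*j := by omega
      rw [hn, hk_even, hk_odd]
      have := hc0 j
      omega
    · have hn : n = 2*j+1 := by omega
      rw [hn]
      have e : 2*j+1+1 = 2*(j+1) := by ring
      rw [e, hk_odd, hk_even]
      have := hbS j
      omega
  · -- positivity
    intro n
    rcases Nat.even_or_odd n with ⟨j, hj⟩ | ⟨j, hj⟩
    · have hn : n = 2*j := by omega
      rw [hn, hk_even]; exact hbpos j
    · have hn : n = 2*j+1 := by omega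
      rw [hn, hk_odd]
      have := hbpos j
      omega
  · -- m n < k n
    intro n
    rcases Nat.even_or_odd n with ⟨j, hj⟩ | ⟨j, hj⟩
    · have hn : n = 2*j := by omega
      rw [hn, hk_even]
      exact lt_of_le_of_lt (hm.monotone (by omega : 2*j ≤ 2*j+1)) (hmb j)
    · have hn : n = 2*j+1 := by omega
      rw [hn, hk_odd]
      exact lt_of_lt_of_le (hmb j) (Nat.le_add_right _ _)
  · -- Characterizes
    intro α
    have hhalf : Filter.Tendsto (fun n : ℕ => n/2) Filter.atTop Filter.atTop :=
      Filter.tendsto_atTop_atTop.mpr fun q => ⟨2*q, fun a ha => by omega⟩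
    constructor
    · intro hα
      obtain ⟨L, hL⟩ : ∃ L, h L = α := by
        have : α ∈ (H : Set (AddCircle (1:ℝ))) := hα
        rw [hrange] at this
        exact this
      have T1 : Filter.Tendsto (fun n : ℕ => 1/(((n/2 : ℕ):ℝ)+1)) Filter.atTop (nhds 0) :=
        tendsto_one_div_add_atTop_nhds_zero_nat.comp hhalf
      have T2 : Filter.Tendsto (fun n : ℕ => ‖c (n/2) • α‖) Filter.atTop (nhds 0) :=
        ((hc α).mp hα).comp hhalf
      have Tg : Filter.Tendsto (fun n : ℕ => 1/(((n/2 : ℕ):ℝ)+1) + ‖c (n/2) • α‖)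
          Filter.atTop (nhds 0) := by
        simpa using T1.add T2
      refine squeeze_zero' (Filter.Eventually.of_forall fun n => norm_nonneg _) ?_ Tg
      filter_upwards [Filter.eventually_ge_atTop (2*L)] with n hn
      have hjL : L ≤ n/2 := by omega
      have hb_bound : ‖b (n/2) • α‖ < 1/(((n/2 : ℕ):ℝ)+1) := by
        rw [← hL]; exact hbn (n/2) L hjL
      rcases Nat.even_or_odd n with ⟨j, hj⟩ | ⟨j, hj⟩
      · have hn2 : n = 2*j := by omega
        have hj2 : n/2 = j := by omega
        rw [hj2] at hb_bound ⊢
        rw [hn2, hk_even]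
        have := norm_nonneg (c j • α)
        linarith
      · have hn2 : n = 2*j+1 := by omega
        have hj2 : n/2 = j := by omega
        rw [hj2] at hb_bound ⊢
        rw [hn2, hk_odd]
        calc ‖(b j + c j) • α‖ = ‖b j • α + c j • α‖ := by rw [add_nsmul]
          _ ≤ ‖b j • α‖ + ‖c j • α‖ := norm_add_le _ _
          _ ≤ 1/((j:ℝ)+1) + ‖c j • α‖ := by linarith
    · intro hT
      apply (hc α).mpr
      have t2 : Filter.Tendsto (fun n : ℕ => 2*n) Filter.atTop Filter.atTop :=
        Filter.tendsto_atTop_atTop.mpr fun q => ⟨q, fun a ha => by omega⟩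
      have t2' : Filter.Tendsto (fun n : ℕ => 2*n+1) Filter.atTop Filter.atTop :=
        Filter.tendsto_atTop_atTop.mpr fun q => ⟨q, fun a ha => by omega⟩
      have T1 : Filter.Tendsto (fun n : ℕ => ‖k (2*n) • α‖) Filter.atTop (nhds 0) :=
        hT.comp t2
      have T2 : Filter.Tendsto (fun n : ℕ => ‖k (2*n+1) • α‖) Filter.atTop (nhds 0) :=
        hT.comp t2'
      have Tg : Filter.Tendsto (fun n : ℕ => ‖k (2*n+1) • α‖ + ‖k (2*n) • α‖)
          Filter.atTop (nhds 0) := by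
        simpa using T2.add T1
      refine squeeze_zero' (Filter.Eventually.of_forall fun n => norm_nonneg _)
        (Filter.Eventually.of_forall fun n => ?_) Tg
      calc ‖c n • α‖ = ‖k (2*n+1) • α - k (2*n) • α‖ := by
            rw [hk_odd, hk_even, add_nsmul]
            simp
        _ ≤ ‖k (2*n+1) • α‖ + ‖k (2*n) • α‖ := norm_sub_le _ _
end

section
/- Let (k_n) be a strictly increasing sequence of positive integers with k_n ≥ n^n for all n. Then sup_n k_{n+1}/k_n = ∞, i.e., the quotients k_{n+1}/k_n are unbounded. -/
/-- If `(kₙ)` is strictly increasing with `kₙ ≥ nⁿ` (and `kₙ > 0`), then the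
quotients `k_{n+1}/kₙ` are unbounded. -/
theorem quotients_unbounded_of_superexp
    (k : ℕ → ℕ) (hk : StrictMono k) (hk0 : ∀ n, 0 < k n)
    (hkn : ∀ n, 1 ≤ n → (n : ℕ)^n ≤ k n) :
    ∀ C : ℝ, ∃ n : ℕ, C < (k (n+1) : ℝ) / (k n : ℝ) := by
  intro C
  by_contra h
  push_neg at h
  have hkpos : ∀ n, (0:ℝ) < (k n : ℝ) := fun n => by exact_mod_cast hk0 n
  have hC1 : (1:ℝ) ≤ C := by
    refine le_trans ?_ (h 0)
    rw [le_div_iff₀ (hkpos 0), one_mul]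
    exact_mod_cast (hk (Nat.lt_succ_self 0)).le
  have hCpos : (0:ℝ) < C := lt_of_lt_of_le one_pos hC1
  have key : ∀ n, (k n : ℝ) ≤ (k 0 : ℝ) * C ^ n := by
    intro n
    induction n with
    | zero => simp
    | succ m ih =>
      have h1 : (k (m+1) : ℝ) ≤ C * k m := by
        have := h m
        rwa [div_le_iff₀ (hkpos m)] at this
      calc (k (m+1) : ℝ) ≤ C * k m := h1
        _ ≤ C * ((k 0 : ℝ) * C ^ m) := by
            exact mul_le_mul_of_nonneg_left ih hCpos.le
        _ = (k 0 : ℝ) * C ^ (m+1) := by ring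
  set n := max (⌈2*C⌉₊) (k 0 + 1) with hn
  have hn1 : 1 ≤ n := le_trans (Nat.le_add_left 1 (k 0)) (le_max_right _ _)
  have hnC : 2 * C ≤ (n : ℝ) := by
    refine le_trans (Nat.le_ceil _) ?_
    exact_mod_cast le_max_left _ _
  have hnk0 : (k 0 : ℝ) < 2 ^ n := by
    have h1 : k 0 < n := lt_of_lt_of_le (Nat.lt_succ_self _) (le_max_right _ _)
    have h2 : n < 2 ^ n := Nat.lt_two_pow_self
    exact_mod_cast lt_trans h1 h2
  have hbig : (k 0 : ℝ) * C ^ n < (n : ℝ) ^ n := by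
    calc (k 0 : ℝ) * C ^ n < 2 ^ n * C ^ n :=
          mul_lt_mul_of_pos_right hnk0 (pow_pos hCpos n)
      _ = (2 * C) ^ n := by rw [mul_pow]
      _ ≤ (n : ℝ) ^ n := pow_le_pow_left₀ (by positivity) hnC n
  have hle : ((n : ℕ) : ℝ) ^ n ≤ (k n : ℝ) := by
    exact_mod_cast hkn n hn1
  exact absurd (le_trans hle (key n)) (not_le.mpr hbig)
end

section
/- Let α, β ∈ 𝕋 = ℝ/ℤ be such that lifts of α and β together with 1 are linearly independent over ℚ. Then there exists a sequence (c_n) of integers with c_n α → β in 𝕋 while (c_n γ) diverges for every γ ∈ 𝕋 \ ⟨α⟩. Consequently, the embedding ι : ℤ → 𝕋, n ↦ nα, gives a compactification of ℤ in which ι(c_n) → β with ⟨β⟩ ∩ ι(ℤ) = {0}, yet there is no infinite subgroup A ≤ 𝕋 with c_n γ → 0 for all γ ∈ A. -/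
open Filter
noncomputable section
namespace Cex

/-- distance to nearest integer -/
def dz (x : ℝ) : ℝ := |x - round x|

lemma dz_nonneg (x : ℝ) : 0 ≤ dz x := abs_nonneg _

lemma dz_le (x : ℝ) (m : ℤ) : dz x ≤ |x - m| := by
  rcases eq_or_ne m (round x) with h | h
  · simp [dz, h]
  · have h1 : (1 : ℝ) ≤ |(round x : ℝ) - m| := by
      have hne : round x - m ≠ 0 := sub_ne_zero.mpr (Ne.symm h)
      have := Int.one_le_abs hne
      have : ((1:ℤ):ℝ) ≤ (|round x - m| : ℤ) := by exact_mod_cast this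
      simpa [Int.cast_abs] using this
    have h2 : dz x ≤ 1/2 := abs_sub_round x
    have h3 : |(round x : ℝ) - m| ≤ dz x + |x - m| := by
      calc |(round x : ℝ) - m| ≤ |(round x : ℝ) - x| + |x - m| := abs_sub_le _ _ _
        _ = dz x + |x - m| := by rw [dz, abs_sub_comm]
    nlinarith [abs_nonneg (x - (m:ℝ))]

lemma dz_coe_norm (x : ℝ) : ‖(x : AddCircle (1:ℝ))‖ = dz x := UnitAddCircle.norm_eq

lemma dz_add (x y : ℝ) : dz (x + y) ≤ dz x + dz y := by
  calc dz (x + y) ≤ |x + y - (round x + round y : ℤ)| := dz_le _ _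
    _ = |(x - round x) + (y - round y)| := by push_cast; ring_nf
    _ ≤ |x - round x| + |y - round y| := abs_add_le _ _
    _ = dz x + dz y := rfl

lemma dz_le_abs (x : ℝ) : dz x ≤ |x| := by simpa using dz_le x 0

lemma dz_int_mul (x : ℝ) (B : ℤ) : dz (B * x) ≤ |(B:ℝ)| * dz x := by
  calc dz (B * x) ≤ |B * x - (B * round x : ℤ)| := dz_le _ _
    _ = |(B:ℝ)| * dz x := by push_cast; rw [dz, ← abs_mul]; ring_nf

/-- if `u` is within `ε` of an integer and `|u| < 1 - ε` then `|u| ≤ ε` -/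
lemma small_of_dz (u ε : ℝ) (h1 : dz u ≤ ε) (h2 : |u| < 1 - ε) : |u| ≤ ε := by
  rcases eq_or_ne (round u) 0 with h | h
  · simpa [dz, h] using h1
  · exfalso
    have h3 : (1:ℝ) ≤ |(round u : ℝ)| := by
      have := Int.one_le_abs h
      have : ((1:ℤ):ℝ) ≤ (|round u| : ℤ) := by exact_mod_cast this
      simpa [Int.cast_abs] using this
    have h4 : |(round u:ℝ)| - |u| ≤ |u - round u| := by
      calc |(round u:ℝ)| - |u| ≤ |(round u:ℝ) - u| := abs_sub_abs_le_abs_sub _ _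
        _ = |u - round u| := abs_sub_comm _ _
    have : 1 - |u| ≤ dz u := by unfold dz; linarith
    linarith


section CF
variable (a : ℝ)

/-- Gauss map iterates of the fractional part of `a` -/
def t : ℕ → ℝ
  | 0 => Int.fract a
  | n+1 => Int.fract (t n)⁻¹

/-- partial quotients -/
def A (n : ℕ) : ℤ := ⌊(t a n)⁻¹⌋

/-- denominators -/
def q : ℕ → ℤ
  | 0 => 1
  | 1 => A a 0
  | n+2 => A a (n+1) * q (n+1) + q n

/-- numerators -/
def p : ℕ → ℤ
  | 0 => ⌊a⌋
  | 1 => A a 0 * ⌊a⌋ + 1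
  | n+2 => A a (n+1) * p (n+1) + p n

def y (n : ℕ) : ℝ := q a n * a - p a n

lemma t_zero : t a 0 = Int.fract a := rfl
lemma t_succ (n : ℕ) : t a (n+1) = Int.fract (t a n)⁻¹ := rfl
lemma q_zero : q a 0 = 1 := rfl
lemma q_one : q a 1 = A a 0 := rfl
lemma q_rec (n : ℕ) : q a (n+2) = A a (n+1) * q a (n+1) + q a n := rfl
lemma p_zero : p a 0 = ⌊a⌋ := rfl
lemma p_one : p a 1 = A a 0 * ⌊a⌋ + 1 := rfl
lemma p_rec (n : ℕ) : p a (n+2) = A a (n+1) * p a (n+1) + p a n := rfl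

variable {a} (ha : Irrational a)
include ha

lemma t_mem : ∀ n, Irrational (t a n) ∧ 0 < t a n ∧ t a n < 1 := by
  intro n
  induction n with
  | zero =>
    rw [t_zero]
    refine ⟨?_, ?_, Int.fract_lt_one a⟩
    · rw [Int.fract]; exact ha.sub_intCast ⌊a⌋
    · rw [Int.fract_pos]; exact fun h => (ha.ne_int ⌊a⌋) h
  | succ n ih =>
    obtain ⟨hirr, h0, h1⟩ := ih
    have hinv : Irrational (t a n)⁻¹ := hirr.inv
    rw [t_succ]
    refine ⟨?_, ?_, Int.fract_lt_one _⟩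
    · rw [Int.fract]; exact hinv.sub_intCast _
    · rw [Int.fract_pos]; exact fun h => (hinv.ne_int _) h

lemma one_le_A (n : ℕ) : 1 ≤ A a n := by
  obtain ⟨_, h0, h1⟩ := t_mem ha (a := a) n
  have : (1:ℝ) < (t a n)⁻¹ := (one_lt_inv₀ h0).mpr h1
  exact Int.le_floor.mpr (by exact_mod_cast this.le)

lemma t_succ_eq (n : ℕ) : t a (n+1) = (t a n)⁻¹ - A a n := by
  rw [t_succ, Int.fract, A]

lemma y_zero : y a 0 = t a 0 := by
  rw [y, q_zero, p_zero, t_zero, Int.fract]; push_cast; ring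

lemma y_succ : ∀ n, y a (n+1) = -(t a (n+1)) * y a n := by
  intro n
  induction n with
  | zero =>
    have h0 : t a 0 ≠ 0 := ne_of_gt (t_mem ha 0).2.1
    have h1 : t a 1 = (t a 0)⁻¹ - A a 0 := t_succ_eq ha 0
    have h2 : y a 1 = A a 0 * (t a 0) - 1 := by
      rw [y, q_one, p_one]; push_cast
      have : (⌊a⌋:ℝ) = a - t a 0 := by rw [t_zero, Int.fract]; ring
      rw [this]; ring
    rw [h2, y_zero ha, h1]
    field_simp
    ring
  | succ n ih =>
    have hrec : y a (n+2) = A a (n+1) * y a (n+1) + y a n := by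
      simp only [y, q_rec, p_rec]; push_cast; ring
    have ht : t a (n+1) ≠ 0 := ne_of_gt (t_mem ha (n+1)).2.1
    have h1 : t a (n+2) = (t a (n+1))⁻¹ - A a (n+1) := t_succ_eq ha (n+1)
    have hy : y a n = -(y a (n+1)) / t a (n+1) := by
      rw [ih]; field_simp
    rw [hrec, hy, h1]
    field_simp
    ring

lemma y_abs_succ (n : ℕ) : |y a (n+1)| = t a (n+1) * |y a n| := by
  rw [y_succ ha n, abs_mul, abs_neg, abs_of_pos (t_mem ha (n+1)).2.1]

lemma y_pos (n : ℕ) : 0 < |y a n| := by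
  induction n with
  | zero => rw [y_zero ha]; exact abs_pos.mpr (ne_of_gt (t_mem ha 0).2.1)
  | succ n ih => rw [y_abs_succ ha n]; exact mul_pos (t_mem ha (n+1)).2.1 ih

lemma y_lt_one (n : ℕ) : |y a n| < 1 := by
  induction n with
  | zero => rw [y_zero ha, abs_of_pos (t_mem ha 0).2.1]; exact (t_mem ha 0).2.2
  | succ n ih =>
    rw [y_abs_succ ha n]
    nlinarith [(t_mem ha (a:=a) (n+1)).2.1, (t_mem ha (a:=a) (n+1)).2.2, y_pos ha (a:=a) n]

lemma y_anti {m n : ℕ} (h : m ≤ n) : |y a n| ≤ |y a m| := by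
  induction n with
  | zero => rw [Nat.le_zero.mp h]
  | succ n ih =>
    rcases Nat.lt_or_ge m (n+1) with h' | h'
    · have := ih (Nat.lt_succ_iff.mp h')
      rw [y_abs_succ ha n]
      nlinarith [(t_mem ha (a:=a) (n+1)).2.1, (t_mem ha (a:=a) (n+1)).2.2, y_pos ha (a:=a) n]
    · have : m = n+1 := le_antisymm h h'
      simp [this]

lemma A_mul_y (n : ℕ) : |(A a (n+1) : ℝ)| * |y a (n+1)| ≤ |y a n| := by
  have h0 : 0 < t a (n+1) := (t_mem ha (n+1)).2.1
  have hA : (A a (n+1) : ℝ) ≤ (t a (n+1))⁻¹ := Int.floor_le _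
  have hA0 : (0:ℝ) ≤ A a (n+1) := by
    have := one_le_A ha (a:=a) (n+1)
    have : (1:ℝ) ≤ A a (n+1) := by exact_mod_cast this
    linarith
  rw [abs_of_nonneg hA0, y_abs_succ ha n]
  have h1 : (A a (n+1) : ℝ) * t a (n+1) ≤ 1 := by
    calc (A a (n+1) : ℝ) * t a (n+1) ≤ (t a (n+1))⁻¹ * t a (n+1) := by nlinarith
      _ = 1 := inv_mul_cancel₀ (ne_of_gt h0)
  nlinarith [y_pos ha (a:=a) n, abs_nonneg (y a n)]

lemma y_decay (n : ℕ) : |y a (n+2)| ≤ |y a n| / 2 := by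
  have h1 : t a (n+1) * t a (n+2) ≤ 1/2 := by
    obtain ⟨_, h10, h11⟩ := t_mem ha (a:=a) (n+1)
    obtain ⟨_, h20, h21⟩ := t_mem ha (a:=a) (n+2)
    rcases le_or_gt (t a (n+1)) (1/2) with h | h
    · nlinarith
    · have h2 : t a (n+2) = (t a (n+1))⁻¹ - A a (n+1) := t_succ_eq ha (n+1)
      have hA : (1:ℝ) ≤ A a (n+1) := by exact_mod_cast one_le_A ha (n+1)
      have h3 : t a (n+1) * t a (n+2) = 1 - A a (n+1) * t a (n+1) := by
        rw [h2]; field_simp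
      rw [h3]; nlinarith
  rw [y_abs_succ ha (n+1), y_abs_succ ha n]
  nlinarith [y_pos ha (a:=a) n, (t_mem ha (a:=a) (n+1)).2.1, (t_mem ha (a:=a) (n+2)).2.1]

lemma y_tendsto : Tendsto (fun n => |y a n|) atTop (nhds 0) := by
  have key : ∀ k n, 2*k ≤ n → |y a n| ≤ (1/2:ℝ)^k := by
    intro k
    induction k with
    | zero => intro n _; simpa using (y_lt_one ha (a:=a) n).le
    | succ k ih =>
      intro n hn
      obtain ⟨m, rfl⟩ : ∃ m, n = m + 2 := ⟨n - 2, by omega⟩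
      calc |y a (m+2)| ≤ |y a m| / 2 := y_decay ha m
        _ ≤ (1/2:ℝ)^k / 2 := by linarith [ih m (by omega)]
        _ = (1/2:ℝ)^(k+1) := by ring
  rw [Metric.tendsto_atTop]
  intro ε hε
  obtain ⟨k, hk⟩ := exists_pow_lt_of_lt_one hε (by norm_num : (1/2:ℝ) < 1)
  refine ⟨2*k, fun n hn => ?_⟩
  rw [Real.dist_eq, sub_zero, abs_abs]
  exact lt_of_le_of_lt (key k n hn) hk

lemma one_le_q : ∀ n, 1 ≤ q a n := by
  intro n
  induction n using Nat.strong_induction_on with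
  | _ n ih =>
    match n with
    | 0 => rw [q_zero]
    | 1 => rw [q_one]; exact one_le_A ha 0
    | (m+2) =>
      have h1 := ih (m+1) (by omega)
      have h2 := ih m (by omega)
      have h3 := one_le_A ha (a:=a) (m+1)
      rw [q_rec]
      nlinarith

lemma q_ge (n : ℕ) : (n : ℤ) ≤ 2 * q a n := by
  induction n using Nat.strong_induction_on with
  | _ n ih =>
    match n with
    | 0 => rw [q_zero]; norm_num
    | 1 => rw [q_one]; have := one_le_A ha (a:=a) 0; omega
    | (m+2) =>
      have h1 := ih (m+1) (by omega)
      have h2 := ih m (by omega)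
      have h3 := one_le_A ha (a:=a) (m+1)
      have h4 := one_le_q ha (a:=a) (m+1)
      have h5 := one_le_q ha (a:=a) m
      rw [q_rec]; push_cast
      nlinarith

lemma det (n : ℕ) : q a n * p a (n+1) - p a n * q a (n+1) = (-1)^n := by
  induction n with
  | zero => rw [q_zero, p_zero, q_one, p_one]; ring
  | succ n ih =>
    calc q a (n+1) * p a (n+2) - p a (n+1) * q a (n+2)
        = -(q a n * p a (n+1) - p a n * q a (n+1)) := by rw [q_rec, p_rec]; ring
      _ = (-1)^(n+1) := by rw [ih]; ring



end CF

lemma y_ne {a : ℝ} (ha : Irrational a) (n : ℕ) : y a n ≠ 0 :=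
  abs_pos.mp (y_pos ha n)

lemma dz_int_shift (x : ℝ) (m : ℤ) : dz (x + m) = dz x := by
  rw [dz, dz, round_add_intCast]; push_cast; ring_nf

lemma div_two_pow (A : ℤ) (hA : 0 ≤ A) (i : ℕ) : A / 2^i / 2 = A / 2^(i+1) := by
  obtain ⟨m, rfl⟩ := Int.eq_ofNat_of_zero_le hA
  have h : ((m / 2^i / 2 : ℕ) : ℤ) = ((m / 2^(i+1) : ℕ) : ℤ) := by
    rw [Nat.div_div_eq_div_mul, pow_succ]
  push_cast at h
  exact h

lemma div_two_pow' (A : ℤ) (hA : 0 ≤ A) (i : ℕ) : A / 2 / 2^i = A / 2^(i+1) := by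
  obtain ⟨m, rfl⟩ := Int.eq_ofNat_of_zero_le hA
  have h : ((m / 2 / 2^i : ℕ) : ℤ) = ((m / 2^(i+1) : ℕ) : ℤ) := by
    rw [Nat.div_div_eq_div_mul, pow_succ]; ring_nf
  push_cast at h
  exact h

lemma exists_div_pow_eq_one (A : ℤ) (hA : 1 ≤ A) : ∃ i : ℕ, A / 2^i = 1 := by
  obtain ⟨m, hm⟩ : ∃ m : ℕ, A = m := ⟨A.toNat, by omega⟩
  subst hm
  induction m using Nat.strong_induction_on with
  | _ m ih =>
    rcases eq_or_lt_of_le hA with h | h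
    · exact ⟨0, by omega⟩
    · have h2 : (2:ℤ) ≤ m := by omega
      have : ∃ k : ℕ, (m:ℤ)/2 = k ∧ k < m ∧ 1 ≤ (k:ℤ) := by
        refine ⟨((m:ℤ)/2).toNat, by omega, by omega, by omega⟩
      obtain ⟨k, hk, hkm, hk1⟩ := this
      obtain ⟨i, hi⟩ := ih k hkm hk1
      refine ⟨i+1, ?_⟩
      rw [← div_two_pow' _ (by omega), hk, hi]

lemma chain_lemma (x ε : ℝ) (A : ℤ) (hA : 1 ≤ A) (hε0 : 0 ≤ ε) (hε : ε < 1/4)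
    (H : ∀ i : ℕ, dz ((A / 2^i : ℤ) * x) ≤ ε) :
    |(A:ℝ) * (x - round x)| ≤ ε := by
  set δ := x - round x with hδ
  have hdzx : |δ| ≤ ε := by
    obtain ⟨i, hi⟩ := exists_div_pow_eq_one A hA
    have h := H i
    rw [hi] at h
    simpa [dz, hδ] using (by simpa using h : dz (1 * x) ≤ ε)
  have key : ∀ k i, A < 2^(i+k) → |((A / 2^i : ℤ) : ℝ) * δ| ≤ ε := by
    intro k
    induction k with
    | zero =>
      intro i hik
      rw [Nat.add_zero] at hik
      have h0 : A / 2^i = 0 := Int.ediv_eq_zero_of_lt (by omega) hik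
      rw [h0]
      simpa using hε0
    | succ k ih =>
      intro i hik
      have hB := ih (i+1) (by rw [show i+1+k = i+(k+1) by ring]; exact hik)
      set B := A / 2^(i+1) with hB'
      have hsplit : A / 2^i = 2 * B + (A / 2^i) % 2 := by
        rw [hB', ← div_two_pow _ (by omega)]; omega
      have hr : (A / 2^i) % 2 = 0 ∨ (A / 2^i) % 2 = 1 := by omega
      have habs : |((A / 2^i : ℤ) : ℝ) * δ| ≤ 3 * ε := by
        rcases hr with h | h
        · rw [hsplit, h]
          push_cast
          calc |(2 * (B:ℝ) + 0) * δ| = 2 * |(B:ℝ) * δ| := by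
                rw [add_zero, show (2 * (B:ℝ)) * δ = 2 * ((B:ℝ) * δ) by ring, abs_mul]
                norm_num
            _ ≤ 3 * ε := by linarith
        · rw [hsplit, h]
          push_cast
          calc |(2 * (B:ℝ) + 1) * δ| = |2 * ((B:ℝ) * δ) + δ| := by ring_nf
            _ ≤ |2 * ((B:ℝ) * δ)| + |δ| := abs_add_le _ _
            _ = 2 * |(B:ℝ) * δ| + |δ| := by rw [abs_mul]; norm_num
            _ ≤ 3 * ε := by linarith
      have hdz : dz (((A / 2^i : ℤ) : ℝ) * δ) ≤ ε := by
        have h1 := H i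
        have h2 : ((A / 2^i : ℤ) : ℝ) * x = ((A / 2^i : ℤ) : ℝ) * δ + ((A / 2^i) * round x : ℤ) := by
          push_cast; rw [hδ]; ring
        rw [h2, dz_int_shift] at h1
        exact h1
      exact small_of_dz _ ε hdz (lt_of_le_of_lt habs (by linarith))
  have hfin := key (A.toNat) 0 (by
    have h1 : A.toNat < 2^(A.toNat) := Nat.lt_two_pow_self
    have h2 : ((A.toNat:ℕ):ℤ) < ((2^(A.toNat):ℕ):ℤ) := by exact_mod_cast h1
    push_cast at h2
    rw [Nat.zero_add]
    omega)
  simpa using hfin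


/-- Main lemma: if the multiples along the designed chain are all close to integers,
then `g ∈ ℤ + ℤa`. -/
theorem main_lemma {a : ℝ} (ha : Irrational a) (g : ℝ)
    (H : ∀ ε : ℝ, 0 < ε → ∃ N : ℕ, ∀ n ≥ N, ∀ i : ℕ,
      dz (((A a (n+1) / 2^i) * q a (n+1) : ℤ) * g) ≤ ε) :
    ∃ k l : ℤ, g = k + l * a := by
  obtain ⟨N, hN⟩ := H (1/5) (by norm_num)
  set m : ℕ → ℤ := fun j => round ((q a j : ℝ) * g) with hm
  set x : ℕ → ℝ := fun j => (q a j : ℝ) * g - m j with hx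
  have hxd : ∀ j, |x j| = dz ((q a j : ℝ) * g) := fun j => rfl
  have step1 : ∀ n ≥ N, |x (n+1)| ≤ 1/5 := by
    intro n hn
    obtain ⟨i, hi⟩ := exists_div_pow_eq_one (A a (n+1)) (one_le_A ha (n+1))
    have := hN n hn i
    rw [hi, one_mul] at this
    rw [hxd]
    exact_mod_cast this
  have step2 : ∀ n ≥ N, |(A a (n+1) : ℝ) * x (n+1)| ≤ 1/5 := by
    intro n hn
    have h := chain_lemma ((q a (n+1) : ℝ) * g) (1/5) (A a (n+1)) (one_le_A ha (n+1))
      (by norm_num) (by norm_num) (fun i => by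
        have := hN n hn i
        have hcast : ((A a (n+1) / 2^i : ℤ) : ℝ) * ((q a (n+1) : ℝ) * g)
            = (((A a (n+1) / 2^i) * q a (n+1) : ℤ) : ℝ) * g := by push_cast; ring
        rw [hcast]
        exact this)
    exact h
  set N₀ := N + 1 with hN₀
  have step3 : ∀ n ≥ N₀, m (n+2) = A a (n+1) * m (n+1) + m n := by
    intro n hn
    set E : ℤ := m (n+2) - A a (n+1) * m (n+1) - m n with hE
    have hcalc : (E : ℝ) = x n + (A a (n+1) : ℝ) * x (n+1) - x (n+2) := by
      have h2 : ((q a (n+2) : ℤ) : ℝ) = (A a (n+1) : ℝ) * (q a (n+1) : ℝ) + (q a n : ℝ) := by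
        exact_mod_cast congrArg (Int.cast : ℤ → ℝ) (q_rec a n)
      simp only [hE, hx]
      push_cast
      rw [show ((q a (n+2) : ℝ)) * g = ((A a (n+1) : ℝ) * (q a (n+1) : ℝ) + (q a n : ℝ)) * g by rw [← h2]]
      ring
    have hb1 : |x n| ≤ 1/5 := by
      obtain ⟨n', rfl⟩ : ∃ n', n = n' + 1 := ⟨n - 1, by omega⟩
      exact step1 n' (by omega)
    have hb2 := step2 (n+1) (by omega)
    have hb3 := step2 n (by omega)
    have hb4 := step1 (n+1) (by omega)
    have hb2' : |x (n+2)| ≤ 1/5 := step1 (n+1) (by omega)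
    have hb5 : |(A a (n+1) : ℝ) * x (n+1)| ≤ 1/5 := step2 n (by omega)
    have : |(E:ℝ)| < 1 := by
      rw [hcalc]
      calc |x n + (A a (n+1) : ℝ) * x (n+1) - x (n+2)|
          ≤ |x n| + |(A a (n+1) : ℝ) * x (n+1)| + |x (n+2)| := by
            have := abs_add_le (x n + (A a (n+1) : ℝ) * x (n+1)) (-(x (n+2)))
            have h2 := abs_add_le (x n) ((A a (n+1) : ℝ) * x (n+1))
            rw [abs_neg] at this
            calc |x n + (A a (n+1):ℝ) * x (n+1) - x (n+2)|
                = |(x n + (A a (n+1):ℝ) * x (n+1)) + -(x (n+2))| := by ring_nf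
              _ ≤ |x n + (A a (n+1):ℝ) * x (n+1)| + |x (n+2)| := by rw [← abs_neg (x (n+2))] at *; exact abs_add_le _ _
              _ ≤ |x n| + |(A a (n+1):ℝ) * x (n+1)| + |x (n+2)| := by linarith
        _ < 1 := by linarith
    have hEint : |E| < 1 := by
      have h' : ((|E| : ℤ) : ℝ) < 1 := by rw [Int.cast_abs]; exact this
      exact_mod_cast h'
    have hE0 : E = 0 := by
      have := abs_lt.mp hEint
      omega
    rw [hE] at hE0
    linarith
  -- solve for k, l
  set s : ℤ := (-1)^N₀ with hs
  have hss : s * s = 1 := by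
    rw [hs, ← pow_add]
    exact Even.neg_one_pow ⟨N₀, rfl⟩
  have hdet := det ha N₀
  set k : ℤ := s * (m N₀ * p a (N₀+1) - p a N₀ * m (N₀+1)) with hk
  set l : ℤ := s * (q a N₀ * m (N₀+1) - m N₀ * q a (N₀+1)) with hl
  have base0 : m N₀ = k * q a N₀ + l * p a N₀ := by
    rw [hk, hl]
    linear_combination (-(m N₀) * s) * hdet + (- m N₀) * hss
  have base1 : m (N₀+1) = k * q a (N₀+1) + l * p a (N₀+1) := by
    rw [hk, hl]
    linear_combination (-(m (N₀+1)) * s) * hdet + (- m (N₀+1)) * hss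
  have ind : ∀ j, m (N₀+j) = k * q a (N₀+j) + l * p a (N₀+j) := by
    have strong : ∀ j, m (N₀+j) = k * q a (N₀+j) + l * p a (N₀+j)
        ∧ m (N₀+j+1) = k * q a (N₀+j+1) + l * p a (N₀+j+1) := by
      intro j
      induction j with
      | zero => exact ⟨base0, base1⟩
      | succ j ih =>
        obtain ⟨ih0, ih1⟩ := ih
        refine ⟨ih1, ?_⟩
        have hrec := step3 (N₀+j) (by omega)
        have hq := q_rec a (N₀+j)
        have hp := p_rec a (N₀+j)
        have e1 : N₀ + j + 2 = N₀ + (j+1) + 1 := by omega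
        rw [← e1] at *
        rw [hrec, hq, hp, ih0, ih1]
        ring
    exact fun j => (strong j).1
  refine ⟨k, l, ?_⟩
  have key : ∀ n ≥ N₀, (q a n : ℝ) * (g - k - l * a) = x n - l * y a n := by
    intro n hn
    obtain ⟨j, rfl⟩ : ∃ j, n = N₀ + j := ⟨n - N₀, by omega⟩
    have hmn := ind j
    have hmc : ((m (N₀+j) : ℤ) : ℝ) = (k : ℝ) * (q a (N₀+j) : ℝ) + (l:ℝ) * (p a (N₀+j) : ℝ) := by
      exact_mod_cast congrArg (Int.cast : ℤ → ℝ) hmn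
    have hxe : (q a (N₀+j) : ℝ) * g = m (N₀+j) + x (N₀+j) := by rw [hx]; ring
    rw [y]
    rw [mul_sub, mul_sub, hxe, hmc]
    ring
  by_contra hne
  have hd : g - (k:ℝ) - (l:ℝ) * a ≠ 0 := fun h => hne (by linarith)
  have hd0 : 0 < |g - (k:ℝ) - (l:ℝ) * a| := abs_pos.mpr hd
  set d := g - (k:ℝ) - (l:ℝ) * a with hdd
  set C : ℝ := 1/5 + |(l:ℝ)| with hC
  have hCpos : 0 < C := by positivity
  have hb : ∀ n, n ≥ N₀ → (n:ℝ) * |d| ≤ 2*C := by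
    intro n hn
    have h1 := key n hn
    have h2 : |x n| ≤ 1/5 := by
      obtain ⟨n', rfl⟩ : ∃ n', n = n' + 1 := ⟨n - 1, by omega⟩
      exact step1 n' (by omega)
    have h3 : |y a n| < 1 := y_lt_one ha n
    have h4 : ((n:ℝ)) ≤ 2 * (q a n : ℝ) := by exact_mod_cast q_ge ha n
    have h5 : |(q a n : ℝ) * d| ≤ C := by
      rw [h1]
      calc |x n - (l:ℝ) * y a n| ≤ |x n| + |(l:ℝ)| * |y a n| := by
            rw [← abs_mul]; exact abs_sub _ _
        _ ≤ C := by
            rw [hC]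
            have : |(l:ℝ)| * |y a n| ≤ |(l:ℝ)| * 1 := by
              apply mul_le_mul_of_nonneg_left h3.le (abs_nonneg _)
            linarith
    have h6 : (0:ℝ) < (q a n:ℝ) := by exact_mod_cast one_le_q ha n |>.trans_lt' (by norm_num)
    rw [abs_mul, abs_of_pos h6] at h5
    nlinarith [abs_nonneg d]
  obtain ⟨n, hn⟩ := exists_nat_gt (max (N₀:ℝ) (2*C/|d|))
  have hn1 : (n:ℝ) > (N₀:ℝ) := lt_of_le_of_lt (le_max_left _ _) hn
  have hn2 : (n:ℝ) > 2*C/|d| := lt_of_le_of_lt (le_max_right _ _) hn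
  have hge : n ≥ N₀ := by exact_mod_cast hn1.le
  have := hb n hge
  have : 2*C < (n:ℝ) * |d| := by
    rw [gt_iff_lt, div_lt_iff₀ hd0] at hn2
    linarith
  linarith [hb n hge]


section Blocks
variable (a b : ℝ)

def e (n : ℕ) : ℤ := round (b / y a n) * q a n
def K (n : ℕ) : ℕ := (A a (n+1)).toNat
def bval (s : ℕ) (i : ℕ) : ℤ := e a b s + (A a (s+1) / 2^i) * q a (s+1)
def blockL (s : ℕ) : List ℤ := (List.range (K a s + 1)).map (bval a b s)
def F (m : ℕ) : List ℤ := ((List.range m).map (blockL a b)).flatten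
def c (n : ℕ) : ℤ := (F a b (n+1)).getD n 0

lemma block_len (s : ℕ) : (blockL a b s).length = K a s + 1 := by
  simp [blockL]

lemma F_succ (m : ℕ) : F a b (m+1) = F a b m ++ blockL a b m := by
  unfold F; rw [List.range_succ]; simp

lemma F_len_mono : Monotone (fun m => (F a b m).length) := by
  apply monotone_nat_of_le_succ
  intro m
  rw [F_succ]; simp

lemma F_len_ge (m : ℕ) : m ≤ (F a b m).length := by
  induction m with
  | zero => simp
  | succ m ih => rw [F_succ]; simp [block_len]; omega

lemma A_lt_pow_K {a : ℝ} (ha : Irrational a) (b : ℝ) (s : ℕ) :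
    A a (s+1) < 2^(K a s) := by
  have h := Nat.lt_two_pow_self (n := (A a (s+1)).toNat)
  have hA := one_le_A ha (s+1)
  unfold K
  calc A a (s+1) = ((A a (s+1)).toNat : ℤ) := by omega
    _ < ((2^((A a (s+1)).toNat) : ℕ) : ℤ) := by exact_mod_cast h
    _ = 2^((A a (s+1)).toNat) := by push_cast; ring

lemma bval_stable {a : ℝ} (ha : Irrational a) (b : ℝ) (s : ℕ) (i : ℕ) :
    bval a b s (min i (K a s)) = bval a b s i := by
  rcases le_or_gt i (K a s) with h | h
  · rw [min_eq_left h]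
  · rw [min_eq_right h.le]
    unfold bval
    have hA : (0:ℤ) ≤ A a (s+1) := by have := one_le_A ha (s+1); omega
    have hKlt := A_lt_pow_K ha b s
    have h1 : A a (s+1) / 2^(K a s) = 0 := Int.ediv_eq_zero_of_lt hA hKlt
    have h2 : A a (s+1) / 2^i = 0 := by
      apply Int.ediv_eq_zero_of_lt hA
      calc A a (s+1) < 2^(K a s) := hKlt
        _ ≤ 2^i := by apply pow_le_pow_right₀ (by norm_num) h.le
    rw [h1, h2]
  
lemma c_stable : ∀ (M n : ℕ), n < (F a b M).length → c a b n = (F a b M).getD n 0 := by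
  have aux : ∀ (M M' : ℕ), M ≤ M' → ∀ n, n < (F a b M).length →
      (F a b M').getD n 0 = (F a b M).getD n 0 := by
    intro M M' h
    induction M' , h using Nat.le_induction with
    | base => intro n _; rfl
    | succ M' hM ih =>
      intro n hn
      rw [F_succ]
      rw [List.getD_append _ _ _ _ (lt_of_lt_of_le hn (F_len_mono a b hM))]
      exact ih n hn
  intro M n hn
  rcases le_or_gt M (n+1) with h | h
  · exact aux M (n+1) h n hn
  · exact (aux (n+1) M h.le n (lt_of_lt_of_le (Nat.lt_succ_self n) (F_len_ge a b (n+1)))).symm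

lemma c_mem (ha : Irrational a) (s i : ℕ) : ∃ nn, s ≤ nn ∧ c a b nn = bval a b s i := by
  set j := min i (K a s) with hj
  refine ⟨(F a b s).length + j, le_trans (F_len_ge a b s) (Nat.le_add_right _ _), ?_⟩
  have hlt : (F a b s).length + j < (F a b (s+1)).length := by
    rw [F_succ]; simp [block_len]; omega
  rw [c_stable a b (s+1) _ hlt, F_succ,
    List.getD_append_right _ _ _ _ (Nat.le_add_right _ _)]
  simp only [Nat.add_sub_cancel_left]
  unfold blockL
  rw [List.getD_eq_getElem _ _ (by simp [block_len] at hlt ⊢; omega)]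
  rw [List.getElem_map, List.getElem_range]
  exact bval_stable ha b s i

lemma c_stage : ∀ n, ∃ s i, (F a b s).length ≤ n ∧ n < (F a b (s+1)).length ∧
    c a b n = bval a b s i := by
  have aux : ∀ M n, n < (F a b M).length → ∃ s i, (F a b s).length ≤ n ∧
      n < (F a b (s+1)).length ∧ (F a b M).getD n 0 = bval a b s i := by
    intro M
    induction M with
    | zero => intro n hn; simp [F] at hn
    | succ M ih =>
      intro n hn
      rcases lt_or_ge n (F a b M).length with h | h
      · obtain ⟨s, i, h1, h2, h3⟩ := ih n h
        exact ⟨s, i, h1, h2, by rw [F_succ, List.getD_append _ _ _ _ h]; exact h3⟩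
      · refine ⟨M, n - (F a b M).length, h, hn, ?_⟩
        rw [F_succ, List.getD_append_right _ _ _ _ h]
        unfold blockL
        have hlen : n - (F a b M).length < K a M + 1 := by
          rw [F_succ] at hn; simp [block_len] at hn; omega
        rw [List.getD_eq_getElem _ _ (by simpa using hlen)]
        rw [List.getElem_map, List.getElem_range]
  intro n
  obtain ⟨s, i, h1, h2, h3⟩ := aux (n+1) n (lt_of_lt_of_le (Nat.lt_succ_self n) (F_len_ge a b (n+1)))
  exact ⟨s, i, h1, h2, by rw [c_stable a b (n+1) n (lt_of_lt_of_le (Nat.lt_succ_self n) (F_len_ge a b (n+1)))]; exact h3⟩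

variable {a}

lemma quality (ha : Irrational a) (s i : ℕ) :
    dz ((bval a b s i : ℝ) * a - b) ≤ 2 * |y a s| := by
  have hy := y_ne ha s
  set R : ℤ := round (b / y a s) with hR
  set B : ℤ := A a (s+1) / 2^i with hB
  have hsplit : (bval a b s i : ℝ) * a - b
      = ((e a b s : ℝ) * a - b) + ((B:ℝ) * (q a (s+1) : ℝ) * a) := by
    unfold bval; push_cast; ring
  have h1 : dz ((e a b s : ℝ) * a - b) ≤ |y a s| / 2 := by
    calc dz ((e a b s : ℝ) * a - b) ≤ |(e a b s : ℝ) * a - b - (R * p a s : ℤ)| := dz_le _ _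
      _ = |(R:ℝ) * y a s - b| := by
          have he : ((e a b s : ℤ):ℝ) = (R:ℝ) * (q a s:ℝ) := by
            unfold e; push_cast; rw [hR]
          rw [he]
          unfold y
          push_cast
          congr 1
          ring
      _ = |y a s| * |(R:ℝ) - b / y a s| := by
          rw [← abs_mul]
          congr 1
          field_simp
      _ ≤ |y a s| * (1/2) := by
          apply mul_le_mul_of_nonneg_left _ (abs_nonneg _)
          rw [abs_sub_comm]
          exact abs_sub_round _
      _ = |y a s| / 2 := by ring
  have h2 : dz ((B:ℝ) * (q a (s+1) : ℝ) * a) ≤ |y a s| := by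
    calc dz ((B:ℝ) * (q a (s+1) : ℝ) * a) ≤ |(B:ℝ) * (q a (s+1):ℝ) * a - (B * p a (s+1) : ℤ)| := dz_le _ _
      _ = |(B:ℝ)| * |y a (s+1)| := by
          rw [← abs_mul]
          congr 1
          unfold y
          push_cast
          ring
      _ ≤ |(A a (s+1) : ℝ)| * |y a (s+1)| := by
          apply mul_le_mul_of_nonneg_right _ (abs_nonneg _)
          have hA1 := one_le_A ha (s+1)
          have h0B : (0:ℤ) ≤ B := Int.ediv_nonneg (by omega) (by positivity)
          have hBA : B ≤ A a (s+1) := by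
            rw [hB]
            exact Int.ediv_le_self _ (by omega)
          rw [abs_of_nonneg (by exact_mod_cast h0B : (0:ℝ) ≤ (B:ℝ)),
            abs_of_nonneg (by exact_mod_cast (by omega : (0:ℤ) ≤ A a (s+1)) : (0:ℝ) ≤ (A a (s+1):ℝ))]
          exact_mod_cast hBA
      _ ≤ |y a s| := A_mul_y ha s
  calc dz ((bval a b s i : ℝ) * a - b) = dz (((e a b s : ℝ) * a - b) + ((B:ℝ) * (q a (s+1) : ℝ) * a)) := by rw [hsplit]
    _ ≤ dz ((e a b s : ℝ) * a - b) + dz ((B:ℝ) * (q a (s+1) : ℝ) * a) := dz_add _ _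
    _ ≤ |y a s| / 2 + |y a s| := by linarith
    _ ≤ 2 * |y a s| := by
        have := abs_nonneg (y a s)
        linarith

end Blocks


lemma bval_K (a b : ℝ) (ha : Irrational a) (s : ℕ) : bval a b s (K a s) = e a b s := by
  unfold bval
  have h1 : A a (s+1) / 2^(K a s) = 0 :=
    Int.ediv_eq_zero_of_lt (by have := one_le_A ha (s+1); omega) (A_lt_pow_K ha b s)
  rw [h1]; ring

lemma coe_int_mul_sub (z : ℤ) (x u : ℝ) :
    ((z * x - u : ℝ) : AddCircle (1:ℝ)) = z • (x : AddCircle (1:ℝ)) - (u : AddCircle (1:ℝ)) := by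
  rw [AddCircle.coe_sub 1, ← AddCircle.coe_zsmul]
  norm_num

section Main
variable {a b : ℝ} (hab : LinearIndependent ℚ ![(1:ℝ), a, b])
include hab

lemma indep_int (k m n : ℤ) (h : (k:ℝ) + m*a + n*b = 0) : k = 0 ∧ m = 0 ∧ n = 0 := by
  have h2 := Fintype.linearIndependent_iff.mp hab ![(k:ℚ), (m:ℚ), (n:ℚ)]
  have h3 : ∑ i, (![(k:ℚ), (m:ℚ), (n:ℚ)] i) • (![(1:ℝ), a, b] i) = 0 := by
    rw [Fin.sum_univ_three]
    simp only [Matrix.cons_val_zero, Matrix.cons_val_one, Matrix.head_cons,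
      Matrix.cons_val_two, Matrix.tail_cons]
    rw [Rat.smul_def, Rat.smul_def, Rat.smul_def]
    push_cast
    linarith
  have h4 := h2 h3
  refine ⟨?_, ?_, ?_⟩
  · have := h4 0; simp at this; exact_mod_cast this
  · have := h4 1; simp at this; exact_mod_cast this
  · have := h4 2; simp at this; exact_mod_cast this

lemma a_irrational : Irrational a := by
  by_contra h
  rw [Irrational] at h
  push_neg at h
  obtain ⟨r, hr⟩ := h
  have hden : ((r.den : ℤ) : ℝ) * a = ((r.num : ℤ) : ℝ) := by
    rw [← hr]
    push_cast
    rw [Rat.cast_def]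
    field_simp
  have h0 := indep_int hab (-r.num) r.den 0 (by push_cast at hden ⊢; linarith)
  have := r.den_pos
  omega

lemma b_mul_ne (j : ℤ) (hj : j • ((b:ℝ) : AddCircle (1:ℝ)) = 0) : j = 0 := by
  rw [← AddCircle.coe_zsmul] at hj
  rw [AddCircle.coe_eq_zero_iff] at hj
  obtain ⟨k, hk⟩ := hj
  have hk' : (k:ℝ) = (j:ℝ) * b := by
    have h2 := hk
    rw [zsmul_eq_mul, zsmul_eq_mul] at h2
    simpa using h2
  exact (indep_int hab (-k) 0 j (by push_cast at hk' ⊢; linarith)).2.2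

end Main

lemma part1 {a : ℝ} (b : ℝ) (ha : Irrational a) :
    Tendsto (fun n => c a b n • ((a:ℝ) : AddCircle (1:ℝ))) atTop (nhds ((b:ℝ) : AddCircle (1:ℝ))) := by
  rw [Metric.tendsto_atTop]
  intro ε hε
  obtain ⟨S, hS⟩ := Metric.tendsto_atTop.mp (y_tendsto ha) (ε/2) (by linarith)
  refine ⟨(F a b S).length, fun n hn => ?_⟩
  obtain ⟨s, i, h1, h2, h3⟩ := c_stage a b n
  have hsS : S ≤ s := by
    by_contra hcon
    push_neg at hcon
    have : (F a b (s+1)).length ≤ (F a b S).length := F_len_mono a b hcon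
    omega
  have hyS : 2 * |y a s| < ε := by
    have := hS S le_rfl
    rw [Real.dist_eq, sub_zero, abs_abs] at this
    have h4 := y_anti ha hsS
    linarith
  have hdist : dist (c a b n • ((a:ℝ) : AddCircle (1:ℝ))) ((b:ℝ) : AddCircle (1:ℝ))
      = dz ((c a b n : ℝ) * a - b) := by
    rw [dist_eq_norm, ← dz_coe_norm, coe_int_mul_sub]
  rw [hdist, h3]
  calc dz ((bval a b s i : ℝ) * a - b) ≤ 2 * |y a s| := quality b ha s i
    _ < ε := hyS

lemma part2 {a : ℝ} (b : ℝ) (ha : Irrational a) (γ : AddCircle (1:ℝ)) (l : AddCircle (1:ℝ))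
    (hl : Tendsto (fun n => c a b n • γ) atTop (nhds l)) :
    γ ∈ AddSubgroup.closure {((a:ℝ) : AddCircle (1:ℝ))} := by
  obtain ⟨g, rfl⟩ : ∃ g : ℝ, (g : AddCircle (1:ℝ)) = γ := ⟨γ.out, by simp⟩
  have H : ∀ ε : ℝ, 0 < ε → ∃ N : ℕ, ∀ n ≥ N, ∀ i : ℕ,
      dz (((A a (n+1) / 2^i) * q a (n+1) : ℤ) * g) ≤ ε := by
    intro ε hε
    obtain ⟨M, hM⟩ := Metric.tendsto_atTop.mp hl (ε/2) (by linarith)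
    refine ⟨M, fun n hn i => ?_⟩
    obtain ⟨n1, hn1, he1⟩ := c_mem a b ha n i
    obtain ⟨n0, hn0, he0⟩ := c_mem a b ha n (K a n)
    have hd1 := hM n1 (le_trans hn hn1)
    have hd0 := hM n0 (le_trans hn hn0)
    have hdiff : c a b n1 - c a b n0 = (A a (n+1) / 2^i) * q a (n+1) := by
      rw [he1, he0, bval_K a b ha n]
      unfold bval
      ring
    have hnorm : ‖(c a b n1 - c a b n0) • ((g:ℝ) : AddCircle (1:ℝ))‖ < ε := by
      rw [sub_zsmul]
      calc ‖c a b n1 • ((g:ℝ) : AddCircle (1:ℝ)) - c a b n0 • ((g:ℝ) : AddCircle (1:ℝ))‖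
          ≤ dist (c a b n1 • ((g:ℝ) : AddCircle (1:ℝ))) l
            + dist (c a b n0 • ((g:ℝ) : AddCircle (1:ℝ))) l := by
            rw [← dist_eq_norm]
            exact dist_triangle_right _ _ _
        _ < ε := by linarith
    rw [hdiff] at hnorm
    have hcast : (((A a (n+1) / 2^i) * q a (n+1) : ℤ)) • ((g:ℝ) : AddCircle (1:ℝ))
        = ((((A a (n+1) / 2^i) * q a (n+1) : ℤ) : ℝ) * g : ℝ) := by
      rw [← AddCircle.coe_zsmul]
      norm_num
    rw [hcast, dz_coe_norm] at hnorm
    exact hnorm.le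
  obtain ⟨k, l', hg⟩ := main_lemma ha g H
  rw [AddSubgroup.mem_closure_singleton]
  refine ⟨l', ?_⟩
  rw [hg]
  have : ((k + l' * a : ℝ) : AddCircle (1:ℝ))
      = ((k:ℝ) : AddCircle (1:ℝ)) + ((l' * a : ℝ) : AddCircle (1:ℝ)) := by
    rw [← AddCircle.coe_add]
  rw [this]
  have hk0 : (((k:ℤ):ℝ) : AddCircle (1:ℝ)) = 0 := by
    rw [AddCircle.coe_eq_zero_iff]; exact ⟨k, by simp⟩
  rw [hk0, zero_add]
  rw [← AddCircle.coe_zsmul]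
  norm_num

theorem final (a b : ℝ) (hab : LinearIndependent ℚ ![(1:ℝ), a, b]) :
    ∃ c : ℕ → ℤ,
      Filter.Tendsto (fun n => c n • (a : AddCircle (1:ℝ))) Filter.atTop
        (nhds (b : AddCircle (1:ℝ))) ∧
      (∀ γ : AddCircle (1:ℝ), γ ∉ AddSubgroup.closure {(a : AddCircle (1:ℝ))} →
        ¬ ∃ l : AddCircle (1:ℝ),
            Filter.Tendsto (fun n => c n • γ) Filter.atTop (nhds l)) ∧
      (AddSubgroup.closure {(b : AddCircle (1:ℝ))} ⊓
        AddSubgroup.closure {(a : AddCircle (1:ℝ))} = ⊥) ∧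
      (∀ A : AddSubgroup (AddCircle (1:ℝ)),
        (∀ γ ∈ A, Filter.Tendsto (fun n => c n • γ) Filter.atTop (nhds 0)) →
        (A : Set (AddCircle (1:ℝ))).Finite) := by
  have ha : Irrational a := a_irrational hab
  refine ⟨c a b, part1 b ha, ?_, ?_, ?_⟩
  · rintro γ hγ ⟨l, hl⟩
    exact hγ (part2 b ha γ l hl)
  · rw [eq_bot_iff]
    rintro x ⟨hxb, hxa⟩
    obtain ⟨mm, hm⟩ := AddSubgroup.mem_closure_singleton.mp hxb
    obtain ⟨nn, hn⟩ := AddSubgroup.mem_closure_singleton.mp hxa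
    have e1 : ((mm * b : ℝ) : AddCircle (1:ℝ)) = mm • ((b:ℝ) : AddCircle (1:ℝ)) := by
      rw [← AddCircle.coe_zsmul]; norm_num
    have e2 : ((nn * a : ℝ) : AddCircle (1:ℝ)) = nn • ((a:ℝ) : AddCircle (1:ℝ)) := by
      rw [← AddCircle.coe_zsmul]; norm_num
    have h0 : ((mm * b - nn * a : ℝ) : AddCircle (1:ℝ)) = 0 := by
      rw [AddCircle.coe_sub 1, e1, e2, hm, hn, sub_self]
    rw [AddCircle.coe_eq_zero_iff] at h0
    obtain ⟨k, hk⟩ := h0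
    have hk' : (k:ℝ) = mm * b - nn * a := by
      have h2 := hk
      rw [zsmul_eq_mul] at h2
      simpa using h2
    obtain ⟨-, h1, h2⟩ := indep_int hab (-k) (-nn) mm (by push_cast; linarith)
    have : x = 0 := by rw [← hm, h2, zero_zsmul]
    simp [this]
  · intro S hS
    have hbot : ∀ x ∈ S, x = (0 : AddCircle (1:ℝ)) := by
      intro x hx
      have hx0 := hS x hx
      have hmem : x ∈ AddSubgroup.closure {((a:ℝ) : AddCircle (1:ℝ))} :=
        part2 b ha x 0 hx0
      obtain ⟨j, hj⟩ := AddSubgroup.mem_closure_singleton.mp hmem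
      have hjb : Tendsto (fun n => c a b n • x) atTop (nhds (j • ((b:ℝ) : AddCircle (1:ℝ)))) := by
        have hcont : Continuous (fun z : AddCircle (1:ℝ) => j • z) := continuous_zsmul j
        have h3 := (hcont.tendsto _).comp (part1 b ha)
        have h4 : (fun n => j • (c a b n • ((a:ℝ) : AddCircle (1:ℝ)))) =
            fun n => c a b n • x := by
          funext n
          rw [← hj, smul_comm]
        rw [← h4]
        exact h3
      have huniq : j • ((b:ℝ) : AddCircle (1:ℝ)) = 0 := tendsto_nhds_unique hjb hx0
      have : j = 0 := b_mul_ne hab j huniq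
      rw [← hj, this, zero_zsmul]
    have : (S : Set (AddCircle (1:ℝ))) ⊆ {0} := fun x hx => hbot x hx
    exact Set.Finite.subset (Set.finite_singleton 0) this


end Cex

end

/-- For `α = a + ℤ`, `β = b + ℤ` with `1, a, b` linearly independent over `ℚ`,
there is an integer sequence `(cₙ)` with `cₙα → β`, diverging at every
`γ ∉ ⟨α⟩`; the cyclic groups `⟨β⟩` and `⟨α⟩` intersect trivially, and no
infinite subgroup `A ≤ 𝕋` satisfies `cₙγ → 0` for all `γ ∈ A`. -/
theorem counterexample_compactification_of_int
    (a b : ℝ) (hab : LinearIndependent ℚ ![(1:ℝ), a, b]) :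
    ∃ c : ℕ → ℤ,
      Filter.Tendsto (fun n => c n • (a : AddCircle (1:ℝ))) Filter.atTop
        (nhds (b : AddCircle (1:ℝ))) ∧
      (∀ γ : AddCircle (1:ℝ), γ ∉ AddSubgroup.closure {(a : AddCircle (1:ℝ))} →
        ¬ ∃ l : AddCircle (1:ℝ),
            Filter.Tendsto (fun n => c n • γ) Filter.atTop (nhds l)) ∧
      (AddSubgroup.closure {(b : AddCircle (1:ℝ))} ⊓
        AddSubgroup.closure {(a : AddCircle (1:ℝ))} = ⊥) ∧
      (∀ A : AddSubgroup (AddCircle (1:ℝ)),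
        (∀ γ ∈ A, Filter.Tendsto (fun n => c n • γ) Filter.atTop (nhds 0)) →
        (A : Set (AddCircle (1:ℝ))).Finite) :=
  Cex.final a b hab
end

section
/- Let H ≤ 𝕋 be a countable subgroup admitting a characterizing sequence, let (ε_j) be a sequence in [0,1] converging to 0, and let ℕ be partitioned into consecutive intervals I_j with |I_j| → ∞. Then there exists a sequence (k_n) of nonnegative integers characterizing H such that |{n : k_n ∈ I_j}| / |I_j| ≥ ε_j for all j. In particular H admits characterizing sequences with bounded quotients k_{n+1}/k_n. -/
open scoped Classical

open Filter

/-- Almost periodicity in a finite product of circles. -/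
lemma lemB (t : ℕ) (x : Fin t → AddCircle (1:ℝ)) (δ : ℝ) (hδ : 0 < δ) :
    ∃ n : ℕ, 2 ≤ n ∧ ∀ i : Fin t, ‖n • x i‖ < δ := by
  haveI : Fact ((0:ℝ) < 1) := ⟨one_pos⟩
  obtain ⟨y, -, φ, hφ, hconv⟩ :=
    IsCompact.tendsto_subseq (isCompact_univ (X := Fin t → AddCircle (1:ℝ)))
      (x := fun m => fun i => m • x i) (fun n => Set.mem_univ _)
  have hcauchy : CauchySeq ((fun m => fun i : Fin t => m • x i) ∘ φ) := hconv.cauchySeq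
  rw [Metric.cauchySeq_iff] at hcauchy
  obtain ⟨N, hN⟩ := hcauchy δ hδ
  refine ⟨φ (N + 2) - φ N, ?_, ?_⟩
  · have h1 : N + 2 ≤ φ (N + 2) := hφ.le_apply
    have h2 : φ N < φ (N + 1) := hφ (by omega)
    have h3 : φ (N + 1) < φ (N + 2) := hφ (by omega)
    omega
  · intro i
    have hle : φ N ≤ φ (N + 2) := hφ.monotone (by omega)
    have key : (φ (N+2) - φ N) • x i = φ (N+2) • x i - φ N • x i := by
      rw [sub_nsmul (x i) hle, sub_eq_add_neg]
    have hd := hN (N+2) (by omega) N (le_rfl)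
    have hi' : dist (φ (N+2) • x i) (φ N • x i) < δ := by
      refine lt_of_le_of_lt ?_ hd
      exact dist_le_pi_dist (fun i : Fin t => φ (N+2) • x i) (fun i : Fin t => φ N • x i) i
    rw [key, ← dist_eq_norm]
    exact hi'

/-- Bohr sets of a sequence in the circle are syndetic. -/
lemma bohr_syndetic (e : ℕ → AddCircle (1:ℝ)) (t : ℕ) (δ : ℝ) (hδ : 0 < δ) :
    ∃ g : ℕ, 0 < g ∧ ∀ a : ℕ, ∃ m, a ≤ m ∧ m < a + g ∧ ∀ i < t, ‖m • e i‖ < δ := by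
  haveI : Fact ((0:ℝ) < 1) := ⟨one_pos⟩
  set v : Fin t → AddCircle (1:ℝ) := fun i => e i with hv
  set S : Set (Fin t → AddCircle (1:ℝ)) := Set.range (fun k : ℕ => fun i => k • v i) with hS
  set T := closure S with hT
  have hTc : IsCompact T := isClosed_closure.isCompact
  have hadd : ∀ y ∈ T, ∀ z ∈ T, y + z ∈ T := by
    intro y hy z hz
    rw [hT, mem_closure_iff_seq_limit] at hy hz ⊢
    obtain ⟨u, hu, huy⟩ := hy
    obtain ⟨w, hw, hwz⟩ := hz
    choose ku hku using fun m => hu m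
    choose kw hkw using fun m => hw m
    refine ⟨fun m => u m + w m, fun m => ⟨ku m + kw m, ?_⟩, huy.add hwz⟩
    funext i
    simp only [add_nsmul, Pi.add_apply]
    rw [← hku m, ← hkw m]
  have hmem : ∀ n : ℕ, (fun i => n • v i) ∈ T := fun n => subset_closure ⟨n, rfl⟩
  have hnsmul : ∀ y ∈ T, ∀ n : ℕ, 1 ≤ n → n • y ∈ T := by
    intro y hy n hn
    induction n with
    | zero => omega
    | succ n ih =>
      rcases Nat.eq_or_lt_of_le hn with h | h
      · simpa [← h] using hy
      · have : n • y ∈ T := ih (by omega)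
        have := hadd _ this _ hy
        simpa [succ_nsmul] using this
  have hTclosed : IsClosed T := isClosed_closure
  have hneg : ∀ y ∈ T, -y ∈ T := by
    intro y hy
    rw [← hTclosed.closure_eq, Metric.mem_closure_iff]
    intro ε hε
    obtain ⟨n, hn2, hnlt⟩ := lemB t y ε hε
    refine ⟨(n - 1) • y, hnsmul y hy (n-1) (by omega), ?_⟩
    rw [dist_pi_lt_iff hε]
    intro i
    have key : (-y) i - ((n - 1) • y) i = -(n • y i) := by
      have h1 : ((n - 1) • y) i = (n - 1) • y i := rfl
      have h2 : (-y) i = -(y i) := rfl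
      rw [h1, h2]
      have : n • y i = (n-1) • y i + y i := by
        conv_lhs => rw [show n = (n-1) + 1 by omega]
        rw [succ_nsmul]
      rw [this]; abel
    rw [dist_eq_norm, key, norm_neg]
    exact hnlt i
  have hball : ∀ y ∈ T, ∃ b : ℕ, ∀ z : Fin t → AddCircle (1:ℝ), dist z y < δ/2 →
      ∀ i : Fin t, ‖z i + b • v i‖ < δ := by
    intro y hy
    have h1 : -y ∈ T := hneg y hy
    rw [hT, Metric.mem_closure_iff] at h1
    obtain ⟨w, ⟨b, hb⟩, hw⟩ := h1 (δ/2) (by linarith)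
    refine ⟨b, fun z hz i => ?_⟩
    have h2 : dist ((-y) i) (w i) ≤ dist (-y) w := dist_le_pi_dist _ _ i
    have h3 : dist (z i) (y i) ≤ dist z y := dist_le_pi_dist _ _ i
    have hwi : w i = b • v i := by rw [← hb]
    have : ‖z i + b • v i‖ = dist (z i) (-(b • v i)) := by
      rw [dist_eq_norm]; congr 1; abel
    rw [this]
    calc dist (z i) (-(b • v i)) ≤ dist (z i) (y i) + dist (y i) (-(b • v i)) := dist_triangle _ _ _
      _ < δ/2 + δ/2 := by
          refine add_lt_add (lt_of_le_of_lt h3 hz) ?_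
          have heq : dist (y i) (-(b • v i)) = dist ((-y) i) (w i) := by
            have h4 : (-y) i = -(y i) := rfl
            rw [hwi, h4, ← dist_neg_neg (y i) (-(b • v i)), neg_neg]
          rw [heq]
          exact lt_of_le_of_lt h2 hw
      _ = δ := by ring
  obtain ⟨s, hs⟩ := hTc.elim_nhds_subcover' (fun y hy => Metric.ball y (δ/2))
    (fun y hy => Metric.ball_mem_nhds _ (by linarith))
  choose bb hbb using fun (y : T) => hball y.1 y.2
  refine ⟨(s.sup fun y => bb y) + 1, by omega, fun a => ?_⟩
  have hav : (fun i => a • v i) ∈ T := hmem a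
  obtain ⟨y, hys, hyball⟩ := Set.mem_iUnion₂.mp (hs hav)
  refine ⟨a + bb y, by omega, ?_, ?_⟩
  · have : bb y ≤ s.sup fun y => bb y := Finset.le_sup hys
    omega
  · intro i hi
    have := hbb y (fun i => a • v i) (Metric.mem_ball.mp hyball) ⟨i, hi⟩
    simpa [add_nsmul] using this

lemma syndetic_count (p : ℕ → Prop) (g : ℕ) (hg : 0 < g)
    (hgap : ∀ a : ℕ, ∃ m, a ≤ m ∧ m < a + g ∧ p m) :
    ∀ L a : ℕ, L / g ≤ ((Finset.Ico a (a+L)).filter p).card := by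
  intro L
  induction L using Nat.strong_induction_on with
  | _ L ih =>
    intro a
    by_cases hLg : L < g
    · simp [Nat.div_eq_of_lt hLg]
    push_neg at hLg
    obtain ⟨m, ham, hmg, hpm⟩ := hgap a
    have hsplit : Finset.Ico a (a+L) = Finset.Ico a (a+g) ∪ Finset.Ico (a+g) (a+L) := by
      rw [Finset.Ico_union_Ico_eq_Ico (by omega) (by omega)]
    have hdisj : Disjoint ((Finset.Ico a (a+g)).filter p) ((Finset.Ico (a+g) (a+L)).filter p) := by
      apply Finset.disjoint_filter_filter
      exact Finset.Ico_disjoint_Ico_consecutive a (a+g) (a+L)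
    have hcard : ((Finset.Ico a (a+L)).filter p).card
        = ((Finset.Ico a (a+g)).filter p).card + ((Finset.Ico (a+g) (a+L)).filter p).card := by
      rw [hsplit, Finset.filter_union, Finset.card_union_of_disjoint hdisj]
    have h1 : 1 ≤ ((Finset.Ico a (a+g)).filter p).card := by
      apply Finset.card_pos.mpr
      exact ⟨m, Finset.mem_filter.mpr ⟨Finset.mem_Ico.mpr ⟨ham, hmg⟩, hpm⟩⟩
    have h2 : (L - g) / g ≤ ((Finset.Ico (a+g) (a+g+(L-g))).filter p).card :=
      ih (L - g) (by omega) (a+g)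
    have heq : a + g + (L - g) = a + L := by omega
    rw [heq] at h2
    have hdiv : L / g = (L - g) / g + 1 := by
      rw [Nat.div_eq_sub_div hg hLg]
    omega

lemma tendsto_norm_iff (f : ℕ → AddCircle (1:ℝ)) :
    Tendsto (fun n => ‖f n‖) atTop (nhds 0) ↔
      ∀ ε : ℝ, 0 < ε → ∀ᶠ n in atTop, ‖f n‖ < ε := by
  rw [Metric.tendsto_atTop]
  constructor
  · intro h ε hε
    obtain ⟨N, hN⟩ := h ε hε
    refine eventually_atTop.mpr ⟨N, fun n hn => ?_⟩
    have := hN n hn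
    rwa [Real.dist_eq, sub_zero, abs_of_nonneg (norm_nonneg _)] at this
  · intro h ε hε
    obtain ⟨N, hN⟩ := eventually_atTop.mp (h ε hε)
    exact ⟨N, fun n hn => by
      rw [Real.dist_eq, sub_zero, abs_of_nonneg (norm_nonneg _)]; exact hN n hn⟩

lemma nat_count_real (q L g : ℕ) (hg : 0 < g) (hq : L / g ≤ q) (hL : 2*g ≤ L) :
    (L:ℝ) / (2*g) ≤ q := by
  have hmod := Nat.div_add_mod L g
  have hmlt : L % g < g := Nat.mod_lt L hg
  have h1 : L < (L / g + 1) * g := by nlinarith [Nat.div_add_mod L g]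
  have h2 : L < (q + 1) * g := lt_of_lt_of_le h1 (Nat.mul_le_mul_right g (by omega))
  have hq2 : 2 ≤ q + 1 := by
    rcases Nat.eq_zero_or_pos q with h | h
    · subst h; simp at h2; omega
    · omega
  have h3 : L ≤ 2 * q * g := by nlinarith
  rw [div_le_iff₀ (by positivity)]
  calc (L:ℝ) ≤ 2 * q * g := by exact_mod_cast h3
    _ = q * (2*g) := by ring

/-- Bohr condition. -/
def BohrP (e : ℕ → AddCircle (1:ℝ)) (t m : ℕ) : Prop := ∀ i' < t, ‖m • e i'‖ < 1/((t:ℝ)+1)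

/-- Given a countable characterizable subgroup `H ≤ 𝕋`, a sequence `εⱼ → 0` in
`[0,1]` and a partition of `ℕ` into consecutive intervals `Iⱼ = [iⱼ, i_{j+1})`
of length tending to infinity, there is a characterizing sequence occupying at
least a proportion `εⱼ` of each `Iⱼ`; in particular there is a characterizing
sequence with bounded quotients. -/
theorem exists_thick_characterizing_sequence
    (H : AddSubgroup (AddCircle (1:ℝ))) (hH : (H : Set (AddCircle (1:ℝ))).Countable)
    (c : ℕ → ℕ) (hc : Characterizes c H)
    (ε : ℕ → ℝ) (hε01 : ∀ j, 0 ≤ ε j ∧ ε j ≤ 1)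
    (hε : Filter.Tendsto ε Filter.atTop (nhds 0))
    (i : ℕ → ℕ) (hi0 : i 0 = 0) (hi : StrictMono i)
    (hilen : Filter.Tendsto (fun j => i (j+1) - i j) Filter.atTop Filter.atTop) :
    (∃ k : ℕ → ℕ, Characterizes k H ∧
      ∀ j : ℕ,
        ε j * ((i (j+1) - i j : ℕ) : ℝ) ≤
          (((Finset.Ico (i j) (i (j+1))).filter
            (fun m => m ∈ Set.range k)).card : ℝ)) ∧
    ∃ k' : ℕ → ℕ, StrictMono k' ∧ (∀ n, 0 < k' n) ∧ Characterizes k' H ∧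
      ∃ C : ℝ, ∀ n, (k' (n+1) : ℝ) / (k' n : ℝ) ≤ C := by
  -- enumeration of H
  obtain ⟨e, he⟩ := hH.exists_eq_range ⟨(0 : AddCircle (1:ℝ)), H.zero_mem⟩
  have heH : ∀ α : AddCircle (1:ℝ), α ∈ H ↔ ∃ i₀, e i₀ = α := by
    intro α
    rw [← SetLike.mem_coe, he]
    exact Set.mem_range
  -- Bohr predicates and gaps
  have hBsyn : ∀ t, ∃ g, 0 < g ∧ ∀ a, ∃ m, a ≤ m ∧ m < a + g ∧ BohrP e t m := by
    intro t
    have hδ : (0:ℝ) < 1/((t:ℝ)+1) := by positivity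
    exact bohr_syndetic e t _ hδ
  choose g0 hg0pos hg0 using hBsyn
  set gg : ℕ → ℕ := fun u => if u = 0 then 1 else g0 u with hgg
  set g : ℕ → ℕ := fun t => max 1 ((Finset.range (t+1)).sup gg) with hg
  have hgpos : ∀ t, 0 < g t := fun t => lt_of_lt_of_le one_pos (le_max_left _ _)
  have hgmono : Monotone g := by
    intro s t hst
    apply max_le_max le_rfl
    apply Finset.sup_mono
    intro u hu
    simp only [Finset.mem_range] at hu ⊢
    omega
  have hggap : ∀ t a, ∃ m, a ≤ m ∧ m < a + g t ∧ BohrP e t m := by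
    intro t a
    rcases Nat.eq_zero_or_pos t with ht | ht
    · subst ht
      exact ⟨a, le_rfl, by have := hgpos 0; omega, fun i' hi' => by omega⟩
    · obtain ⟨m, h1, h2, h3⟩ := hg0 t a
      refine ⟨m, h1, ?_, h3⟩
      have : gg t ≤ g t := le_trans (Finset.le_sup (by simp)) (le_max_right _ _)
      have : g0 t ≤ g t := by
        rw [hgg] at this
        simpa [Nat.pos_iff_ne_zero.mp ht] using this
      omega
  have hgcount : ∀ t a L, L / g t ≤ ((Finset.Ico a (a+L)).filter (BohrP e t)).card :=
    fun t a L => syndetic_count (BohrP e t) (g t) (hgpos t) (hggap t) L a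
  constructor
  · -- PART 1
    set L : ℕ → ℕ := fun j => i (j+1) - i j with hL
    have hij : ∀ j, i j < i (j+1) := fun j => hi (by omega)
    have hL1 : ∀ j, 1 ≤ L j := fun j => by
      have := hij j; simp only [hL]; omega
    have hIco : ∀ j, i j + L j = i (j+1) := fun j => by
      have := hij j; simp only [hL]; omega
    set P : ℕ → ℕ → Prop := fun j t =>
      ε j * (L j : ℝ) ≤ ((Finset.Ico (i j) (i (j+1))).filter (BohrP e t)).card ∧
      ((Finset.Ico (i j) (i (j+1))).filter (BohrP e t)).Nonempty with hP
    have hP0 : ∀ j, P j 0 := by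
      intro j
      have hfull : (Finset.Ico (i j) (i (j+1))).filter (BohrP e 0) = Finset.Ico (i j) (i (j+1)) := by
        apply Finset.filter_true_of_mem
        intro m hm i' hi'
        omega
      constructor
      · rw [hfull, Nat.card_Ico]
        calc ε j * (L j : ℝ) ≤ 1 * (L j : ℝ) :=
              mul_le_mul_of_nonneg_right (hε01 j).2 (by positivity)
          _ = ((i (j+1) - i j : ℕ) : ℝ) := by rw [one_mul]
      · rw [hfull]
        exact Finset.nonempty_Ico.mpr (hij j)
    set t₁ : ℕ → ℕ := fun j => Nat.findGreatest (P j) j with ht₁def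
    have hPt : ∀ j, P j (t₁ j) := fun j => Nat.findGreatest_spec (Nat.zero_le j) (hP0 j)
    set E : ℕ → Finset ℕ := fun j => (Finset.Ico (i j) (i (j+1))).filter (BohrP e (t₁ j)) with hE
    set U : ℕ → Prop := fun m => ∃ j, m ∈ E j with hU
    have hEsub : ∀ j, ∀ m ∈ E j, i j ≤ m ∧ m < i (j+1) := by
      intro j m hm
      have := Finset.mem_filter.mp hm
      exact Finset.mem_Ico.mp this.1
    have hijj : ∀ j, j ≤ i j := fun j => hi.le_apply
    have hUinf : (setOf U).Infinite := by
      by_contra hfin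
      rw [Set.not_infinite] at hfin
      obtain ⟨b, hb⟩ := hfin.bddAbove
      obtain ⟨m, hm⟩ := (hPt (b+1)).2
      have hmU : U m := ⟨b+1, hm⟩
      have := hb hmU
      have h1 := (hEsub (b+1) m hm).1
      have h2 := hijj (b+1)
      omega
    have ht1inf : ∀ T : ℕ, ∃ J, ∀ j, J ≤ j → T ≤ t₁ j := by
      intro T
      have hpos : (0:ℝ) < 1/(2*(g T:ℝ)) := by
        have := hgpos T
        positivity
      have hev1 : ∀ᶠ j in atTop, ε j < 1/(2*(g T:ℝ)) := hε.eventually_lt_const hpos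
      have hev2 : ∀ᶠ j in atTop, 2 * g T ≤ i (j+1) - i j := hilen.eventually_ge_atTop (2 * g T)
      obtain ⟨J1, hJ1⟩ := eventually_atTop.mp hev1
      obtain ⟨J2, hJ2⟩ := eventually_atTop.mp hev2
      refine ⟨max (max J1 J2) T, fun j hj => ?_⟩
      have hjT : T ≤ j := le_trans (le_max_right _ _) hj
      have hj1 : J1 ≤ j := le_trans (le_trans (le_max_left _ _) (le_max_left _ _)) hj
      have hj2 : J2 ≤ j := le_trans (le_trans (le_max_right _ _) (le_max_left _ _)) hj
      apply Nat.le_findGreatest hjT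
      have hLj : 2 * g T ≤ L j := hJ2 j hj2
      have hcnt : L j / g T ≤ ((Finset.Ico (i j) (i j + L j)).filter (BohrP e T)).card :=
        hgcount T (i j) (L j)
      rw [hIco j] at hcnt
      constructor
      · have hreal : (L j:ℝ)/(2*(g T:ℝ)) ≤
            (((Finset.Ico (i j) (i (j+1))).filter (BohrP e T)).card : ℝ) := by
          have := nat_count_real _ (L j) (g T) (hgpos T) hcnt hLj
          calc (L j:ℝ)/(2*(g T:ℝ)) = (L j:ℝ)/((2*(g T):ℕ):ℝ) := by push_cast; ring_nf
            _ ≤ _ := by exact_mod_cast this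
        calc ε j * (L j : ℝ) ≤ (1/(2*(g T:ℝ))) * (L j:ℝ) := by
              apply mul_le_mul_of_nonneg_right (le_of_lt (hJ1 j hj1)) (by positivity)
          _ = (L j:ℝ)/(2*(g T:ℝ)) := by ring
          _ ≤ _ := hreal
      · apply Finset.card_pos.mp
        have : 1 ≤ L j / g T := by
          rw [Nat.le_div_iff_mul_le (hgpos T)]
          omega
        omega
    set k : ℕ → ℕ := fun n => if n % 2 = 0 then c (n/2) else Nat.nth U (n/2) with hk
    have hcov : ∀ m, U m → m ∈ Set.range k := by
      intro m hm
      refine ⟨2 * (Nat.count U m) + 1, ?_⟩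
      have h1 : (2 * (Nat.count U m) + 1) % 2 = 1 := by omega
      have h2 : (2 * (Nat.count U m) + 1) / 2 = Nat.count U m := by omega
      simp only [hk, h1, h2]
      simpa using Nat.nth_count hm
    refine ⟨k, ?_, ?_⟩
    · intro α
      constructor
      · intro hα
        rw [tendsto_norm_iff]
        intro ε' hε'
        obtain ⟨i₀, hi₀⟩ := (heH α).mp hα
        have hcf := (hc α).mp hα
        obtain ⟨N₁, hN₁⟩ := eventually_atTop.mp ((tendsto_norm_iff _).mp hcf ε' hε')
        obtain ⟨T, hT⟩ := exists_nat_gt (1/ε')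
        obtain ⟨J, hJ⟩ := ht1inf (max T (i₀ + 1))
        have hodd : ∀ r, i J ≤ r → ‖(Nat.nth U r) • α‖ < ε' := by
          intro r hr
          have hUr : U (Nat.nth U r) := Nat.nth_mem_of_infinite hUinf r
          have hge : r ≤ Nat.nth U r := (Nat.nth_strictMono hUinf).le_apply
          obtain ⟨j, hj⟩ := hUr
          have hb := hEsub j _ hj
          have hjJ : J ≤ j := by
            by_contra h
            push_neg at h
            have : i (j+1) ≤ i J := hi.monotone (by omega)
            omega
          have ht := hJ j hjJ
          have hBm : BohrP e (t₁ j) (Nat.nth U r) := (Finset.mem_filter.mp hj).2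
          have hi₀lt : i₀ < t₁ j := by
            have : i₀ + 1 ≤ max T (i₀+1) := le_max_right _ _
            omega
          have hnorm := hBm i₀ hi₀lt
          rw [hi₀] at hnorm
          refine lt_trans hnorm ?_
          have hTle : (T:ℝ) ≤ (t₁ j : ℝ) := by
            have : T ≤ max T (i₀+1) := le_max_left _ _
            exact_mod_cast le_trans this ht
          rw [div_lt_iff₀ (by positivity)]
          have h1ε : 1/ε' * ε' = 1 := by field_simp
          nlinarith [hε', hT]
        rw [eventually_atTop]
        refine ⟨max (2*N₁) (2 * i J + 1), fun n hn => ?_⟩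
        by_cases hpar : n % 2 = 0
        · have hkn : k n = c (n/2) := by simp only [hk, hpar]; simp
          rw [hkn]
          apply hN₁
          have : 2*N₁ ≤ n := le_trans (le_max_left _ _) hn
          omega
        · have hkn : k n = Nat.nth U (n/2) := by simp only [hk, hpar]; simp
          rw [hkn]
          apply hodd
          have : 2 * i J + 1 ≤ n := le_trans (le_max_right _ _) hn
          omega
      · intro htend
        apply (hc α).mpr
        have hcomp : (fun r => ‖c r • α‖) = (fun n => ‖k n • α‖) ∘ (fun r => 2*r) := by
          funext r
          have h1 : (2*r) % 2 = 0 := by omega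
          have h2 : (2*r) / 2 = r := by omega
          simp only [Function.comp, hk, h1, h2]
          simp
        rw [hcomp]
        exact htend.comp (tendsto_atTop_atTop_of_monotone
          (fun a b h => by omega) (fun b => ⟨b, by omega⟩))
    · intro j
      have hsub : E j ⊆ (Finset.Ico (i j) (i (j+1))).filter (fun m => m ∈ Set.range k) := by
        intro m hm
        exact Finset.mem_filter.mpr ⟨(Finset.mem_filter.mp hm).1, hcov m ⟨j, hm⟩⟩
      have hcard := Finset.card_le_card hsub
      have h1 := (hPt j).1
      calc ε j * ((i (j+1) - i j : ℕ):ℝ) ≤ ((E j).card : ℝ) := h1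
        _ ≤ _ := by exact_mod_cast hcard
  · -- PART 2
    have hg01 : g 0 = 1 := by
      simp [hg, hgg]
    set t2 : ℕ → ℕ := fun r => Nat.findGreatest (fun u => g u ≤ 2^(2*r)) r with ht2
    have ht2spec : ∀ r, g (t2 r) ≤ 2^(2*r) := by
      intro r
      have h0 : g 0 ≤ 2^(2*r) := by rw [hg01]; exact Nat.one_le_two_pow
      exact Nat.findGreatest_spec (P := fun u => g u ≤ 2^(2*r)) (Nat.zero_le r) h0
    have ht2inf : ∀ T, ∃ R, ∀ r, R ≤ r → T ≤ t2 r := by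
      intro T
      refine ⟨max T (g T), fun r hr => ?_⟩
      apply Nat.le_findGreatest (le_trans (le_max_left _ _) hr)
      have h1 : g T ≤ r := le_trans (le_max_right _ _) hr
      have h2 : r < 2^r := Nat.lt_two_pow_self (n := r)
      have h3 : (2:ℕ)^r ≤ 2^(2*r) := Nat.pow_le_pow_right (by omega) (by omega)
      omega
    have haex : ∀ r : ℕ, ∃ m, 2^(2*r) ≤ m ∧ m < 2^(2*r) + g (t2 r) ∧ BohrP e (t2 r) m :=
      fun r => hggap (t2 r) (2^(2*r))
    choose aa haa1 haa2 haa3 using haex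
    have hpow1 : ∀ r : ℕ, (2:ℕ)^(2*r+1) = 2 * 2^(2*r) := fun r => by ring
    have hpow2 : ∀ r : ℕ, (2:ℕ)^(2*r+2) = 4 * 2^(2*r) := fun r => by ring
    have hpow3 : ∀ r : ℕ, (2:ℕ)^(2*r+3) = 8 * 2^(2*r) := fun r => by ring
    have hpowr : ∀ r : ℕ, r ≤ 2^(2*r) := by
      intro r
      have h2 : r < 2^r := Nat.lt_two_pow_self (n := r)
      have h3 : (2:ℕ)^r ≤ 2^(2*r) := Nat.pow_le_pow_right (by omega) (by omega)
      omega
    have haub : ∀ r, aa r < 2^(2*r+1) := by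
      intro r
      have h1 := ht2spec r
      have h2 := haa2 r
      have := hpow1 r
      omega
    -- scheduler
    set ν : ℕ → ℕ := fun r => Nat.rec 0 (fun r' s => if c s < 2^(2*r') then s + 1 else s) r with hν
    have hνsucc : ∀ r, ν (r+1) = if c (ν r) < 2^(2*r) then ν r + 1 else ν r := fun r => rfl
    have hνmono : Monotone ν := monotone_nat_of_le_succ (fun r => by rw [hνsucc]; split <;> omega)
    have hνle : ∀ r, ν r ≤ r := by
      intro r
      induction r with
      | zero => exact le_rfl
      | succ r ih => rw [hνsucc]; split <;> omega
    have hstep : ∀ d r₀ m, ν r₀ = m → c m < 2^(2*(r₀ + d)) → ∃ r, ν r = m ∧ c m < 2^(2*r) := by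
      intro d
      induction d with
      | zero => exact fun r₀ m h1 h2 => ⟨r₀, h1, by simpa using h2⟩
      | succ d ih =>
        intro r₀ m h1 h2
        by_cases hcm : c m < 2^(2*r₀)
        · exact ⟨r₀, h1, hcm⟩
        · have hnext : ν (r₀+1) = m := by
            rw [hνsucc, h1, if_neg hcm]
          apply ih (r₀+1) m hnext
          have : r₀ + 1 + d = r₀ + (d+1) := by omega
          rw [this]
          exact h2
    have hνsurj : ∀ m, ∃ r, ν r = m ∧ c m < 2^(2*r) := by
      intro m
      induction m with
      | zero =>
        apply hstep (c 0 + 1) 0 0 rfl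
        have := hpowr (0 + (c 0 + 1))
        omega
      | succ m ih =>
        obtain ⟨r, hr1, hr2⟩ := ih
        have hnext : ν (r+1) = m + 1 := by rw [hνsucc, hr1, if_pos hr2]
        apply hstep (c (m+1) + 1) (r+1) (m+1) hnext
        have := hpowr ((r+1) + (c (m+1) + 1))
        omega
    have hνtop : ∀ M, ∃ R, ∀ r, R ≤ r → M ≤ ν r := by
      intro M
      obtain ⟨r, hr1, -⟩ := hνsurj M
      exact ⟨r, fun r' hr' => hr1 ▸ hνmono hr'⟩
    -- the set W
    set W : ℕ → Prop := fun m => (∃ r, m = aa r) ∨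
      (∃ r, c (ν r) < 2^(2*r) ∧ 0 < c (ν r) ∧ m = c (ν r) + aa r) with hW
    have hWstruct : ∀ m, W m → ∃ r, 2^(2*r) ≤ m ∧ m < 2^(2*r+2) ∧
        (m = aa r ∨ (c (ν r) < 2^(2*r) ∧ 0 < c (ν r) ∧ m = c (ν r) + aa r)) := by
      intro m hm
      rcases hm with ⟨r, hr⟩ | ⟨r, h1, h2, h3⟩
      · refine ⟨r, ?_, ?_, Or.inl hr⟩
        · rw [hr]; exact haa1 r
        · rw [hr]
          have := haub r
          have := hpow1 r
          have := hpow2 r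
          omega
      · refine ⟨r, ?_, ?_, Or.inr ⟨h1, h2, h3⟩⟩
        · rw [h3]
          have := haa1 r
          omega
        · rw [h3]
          have := haub r
          have := hpow1 r
          have := hpow2 r
          omega
    have hWinf : (setOf W).Infinite := by
      by_contra hfin
      rw [Set.not_infinite] at hfin
      obtain ⟨b, hb⟩ := hfin.bddAbove
      have hmem : W (aa (b+1)) := Or.inl ⟨b+1, rfl⟩
      have := hb hmem
      have h1 := haa1 (b+1)
      have h2 := hpowr (b+1)
      omega
    set k' : ℕ → ℕ := Nat.nth W with hk'
    have hk'mono : StrictMono k' := Nat.nth_strictMono hWinf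
    have hk'mem : ∀ n, W (k' n) := fun n => Nat.nth_mem_of_infinite hWinf n
    have hnext : ∀ m, W m → ∃ m', W m' ∧ m < m' ∧ m' ≤ 8 * m := by
      intro m hm
      obtain ⟨r, hb1, hb2, -⟩ := hWstruct m hm
      refine ⟨aa (r+1), Or.inl ⟨r+1, rfl⟩, ?_, ?_⟩
      · have h1 := haa1 (r+1)
        have : 2*(r+1) = 2*r+2 := by omega
        rw [this] at h1
        omega
      · have h1 := haub (r+1)
        have : 2*(r+1)+1 = 2*r+3 := by omega
        rw [this] at h1
        have := hpow3 r
        omega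
    have hle8 : ∀ n, k' (n+1) ≤ 8 * k' n := by
      intro n
      obtain ⟨m', hm'W, hmm', hm'le⟩ := hnext (k' n) (hk'mem n)
      have hcnt : Nat.nth W (Nat.count W m') = m' := Nat.nth_count hm'W
      have hlt : n < Nat.count W m' := by
        have : Nat.nth W n < Nat.nth W (Nat.count W m') := by rw [hcnt]; exact hmm'
        exact (Nat.nth_lt_nth hWinf).mp this
      have hmono := (Nat.nth_strictMono hWinf).monotone (show n+1 ≤ Nat.count W m' by omega)
      rw [hcnt] at hmono
      exact le_trans hmono hm'le
    have hWpos : ∀ m, W m → 0 < m := by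
      intro m hm
      obtain ⟨r, hb1, -, -⟩ := hWstruct m hm
      have := Nat.one_le_two_pow (n := 2*r)
      omega
    refine ⟨k', hk'mono, fun n => hWpos _ (hk'mem n), ?_, ⟨8, fun n => ?_⟩⟩
    · intro α
      constructor
      · intro hα
        rw [tendsto_norm_iff]
        intro ε' hε'
        obtain ⟨i₀, hi₀⟩ := (heH α).mp hα
        have hcf := (hc α).mp hα
        obtain ⟨Nc, hNc⟩ := eventually_atTop.mp ((tendsto_norm_iff _).mp hcf (ε'/2) (by linarith))
        obtain ⟨T, hT⟩ := exists_nat_gt (2/ε')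
        obtain ⟨R₁, hR₁⟩ := ht2inf (max T (i₀ + 1))
        obtain ⟨R₂, hR₂⟩ := hνtop Nc
        set R := max R₁ R₂ with hR
        have haanorm : ∀ r, R ≤ r → ‖aa r • α‖ < ε'/2 := by
          intro r hr
          have ht2r : max T (i₀+1) ≤ t2 r := hR₁ r (le_trans (le_max_left _ _) hr)
          have hi₀lt : i₀ < t2 r := by
            have : i₀ + 1 ≤ max T (i₀+1) := le_max_right _ _
            omega
          have hnorm := haa3 r i₀ hi₀lt
          rw [hi₀] at hnorm
          refine lt_trans hnorm ?_
          have hTle : (T:ℝ) ≤ (t2 r : ℝ) := by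
            have : T ≤ max T (i₀+1) := le_max_left _ _
            exact_mod_cast le_trans this ht2r
          rw [div_lt_iff₀ (by positivity)]
          have h2T : (2:ℝ) < (T:ℝ) * ε' := (div_lt_iff₀ hε').mp hT
          have htr : (0:ℝ) ≤ (t2 r : ℝ) := by positivity
          nlinarith
        have hWgood : ∀ m, W m → 2^(2*R+2) ≤ m → ‖m • α‖ < ε' := by
          intro m hm hmR
          obtain ⟨r, hb1, hb2, hcase⟩ := hWstruct m hm
          have hrR : R ≤ r := by
            have hlt : (2:ℕ)^(2*R+2) < 2^(2*r+2) := by omega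
            have := (Nat.pow_lt_pow_iff_right (a := 2) (by omega)).mp hlt
            omega
          rcases hcase with hcase | ⟨h1, h2, h3⟩
          · rw [hcase]
            have := haanorm r hrR
            linarith
          · rw [h3]
            have hνr : Nc ≤ ν r := hR₂ r (le_trans (le_max_right _ _) hrR)
            have hn1 := hNc (ν r) hνr
            have hn2 := haanorm r hrR
            calc ‖(c (ν r) + aa r) • α‖ = ‖c (ν r) • α + aa r • α‖ := by rw [add_nsmul]
              _ ≤ ‖c (ν r) • α‖ + ‖aa r • α‖ := norm_add_le _ _
              _ < ε'/2 + ε'/2 := add_lt_add hn1 hn2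
              _ = ε' := by ring
        rw [eventually_atTop]
        refine ⟨2^(2*R+2), fun n hn => ?_⟩
        apply hWgood (k' n) (hk'mem n)
        exact le_trans hn hk'mono.le_apply
      · intro htend
        apply (hc α).mpr
        rw [tendsto_norm_iff]
        intro ε' hε'
        obtain ⟨N, hN⟩ := eventually_atTop.mp ((tendsto_norm_iff _).mp htend (ε'/2) (by linarith))
        have hWbig : ∀ w, W w → k' N ≤ w → ‖w • α‖ < ε'/2 := by
          intro w hw hge
          have hcnt : k' (Nat.count W w) = w := Nat.nth_count hw
          have hNle : N ≤ Nat.count W w := by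
            have : Nat.nth W N ≤ Nat.nth W (Nat.count W w) := by
              show Nat.nth W N ≤ k' (Nat.count W w)
              rw [hcnt]; exact hge
            exact (Nat.nth_le_nth hWinf).mp this
          have := hN (Nat.count W w) hNle
          rwa [hcnt] at this
        rw [eventually_atTop]
        refine ⟨k' N, fun m hm => ?_⟩
        obtain ⟨r, hr1, hr2⟩ := hνsurj m
        have hrm : m ≤ r := hr1 ▸ hνle r
        by_cases hc0 : c m = 0
        · rw [hc0]
          simpa using hε'
        · have haaN : k' N ≤ aa r := by
            have h1 := haa1 r
            have h2 := hpowr r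
            omega
          have hw1 : W (aa r) := Or.inl ⟨r, rfl⟩
          have hw2 : W (c m + aa r) := Or.inr ⟨r, by rw [hr1]; exact hr2,
            by rw [hr1]; omega, by rw [hr1]⟩
          have hn1 := hWbig (aa r) hw1 haaN
          have hn2 := hWbig (c m + aa r) hw2 (by omega)
          have heq : (c m) • α = (c m + aa r) • α - (aa r) • α := by
            rw [add_nsmul]; abel
          rw [heq]
          calc ‖(c m + aa r) • α - (aa r) • α‖ ≤ ‖(c m + aa r) • α‖ + ‖(aa r) • α‖ :=
                norm_sub_le _ _
            _ < ε'/2 + ε'/2 := add_lt_add hn2 hn1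
            _ = ε' := by ring
    · have h8 := hle8 n
      have hpos : (0:ℝ) < (k' n : ℝ) := by
        exact_mod_cast hWpos _ (hk'mem n)
      rw [div_le_iff₀ hpos]
      calc ((k' (n+1) : ℕ):ℝ) ≤ ((8 * k' n : ℕ):ℝ) := by exact_mod_cast h8
        _ = 8 * (k' n : ℝ) := by push_cast; ring
end
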